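/- arXiv:2604.05143 — 4 statements merged into one kernel-verified Lean document; each statement's English description precedes it below -/
import Mathlib

section
/- Normalization of the candidate survival probability: suppose ε ∈ (0,1) with γ − 1 − ε > 0 and C₀ > 0 with F̄(z) ≤ C₀ z^{−ε} for all z > 0. Let g₁ be the continuous solution on [0, ∞) of the Volterra equation (★) with constant Φ₀ = 1. Then I₁ := ∫₀^∞ g₁(y) dy is finite, the number Φ₀* := 1/(1 + I₁) lies in (0,1), and the function G(u) := Φ₀* (1 + ∫₀ᵘ g₁(y) dy) is strictly increasing on [0, ∞) with G(0) = Φ₀* and lim_{u→∞} G(u) = 1. -/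
open MeasureTheory Filter Set Topology

/-- Tail of a distribution function. -/
noncomputable def Fbar (F : ℝ → ℝ) (x : ℝ) : ℝ := 1 - F x

/-- `F` is the distribution function of a positive random variable: nondecreasing,
right-continuous, vanishing on `(-∞, 0]`, tending to `1` at `+∞`. -/
def IsCDF (F : ℝ → ℝ) : Prop :=
  Monotone F ∧ (∀ x, ContinuousWithinAt F (Set.Ici x) x) ∧
    (∀ x ≤ 0, F x = 0) ∧ Tendsto F atTop (𝓝 1)

/-- The convolution operator `(Bg)(t) = ∫₀ᵗ g(t-y) F̄(y) dy`. -/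
noncomputable def Bop (F g : ℝ → ℝ) (t : ℝ) : ℝ :=
  ∫ y in (0:ℝ)..t, g (t - y) * Fbar F y

/-- `g` is a continuous solution of the Volterra equation (★) on `[0, ∞)`. -/
def IsVolterraSol (γ α μ Φ₀ : ℝ) (F g : ℝ → ℝ) : Prop :=
  ContinuousOn g (Set.Ici 0) ∧
  ∀ u : ℝ, 0 < u → g u = μ * u ^ (-γ) * Real.exp (α / u) *
    ∫ t in (0:ℝ)..u, t ^ (γ - 2) * Real.exp (-α / t) * (Φ₀ * Fbar F t + Bop F g t)

set_option maxHeartbeats 4000000 in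
theorem stmt11 (γ α μ : ℝ) (hγ : 1 < γ) (hα : 0 < α) (hμ : 0 < μ)
    (F : ℝ → ℝ) (hF : IsCDF F)
    (ε C₀ : ℝ) (hε : ε ∈ Set.Ioo (0:ℝ) 1) (hγε : 0 < γ - 1 - ε) (hC₀ : 0 < C₀)
    (htail : ∀ z : ℝ, 0 < z → Fbar F z ≤ C₀ * z ^ (-ε))
    (g₁ : ℝ → ℝ) (hg₁ : IsVolterraSol γ α μ 1 F g₁)
    (I₁ : ℝ) (hI₁ : I₁ = ∫ y in Set.Ioi (0:ℝ), g₁ y)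
    (G : ℝ → ℝ) (hG : ∀ u : ℝ, G u = (1 / (1 + I₁)) * (1 + ∫ y in (0:ℝ)..u, g₁ y)) :
    IntegrableOn g₁ (Set.Ioi 0) volume ∧
    (1 / (1 + I₁)) ∈ Set.Ioo (0:ℝ) 1 ∧
    StrictMonoOn G (Set.Ici 0) ∧ G 0 = 1 / (1 + I₁) ∧
    Tendsto G atTop (𝓝 1) := by
  obtain ⟨hε0, hε1⟩ := hε
  obtain ⟨hgc, heq⟩ := hg₁
  -- Basic facts about F and Fbar
  have hF0 : ∀ x : ℝ, 0 ≤ F x := by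
    intro x
    rcases le_or_gt x 0 with h | h
    · exact le_of_eq (hF.2.2.1 x h).symm
    · rw [← hF.2.2.1 0 le_rfl]; exact hF.1 h.le
  have hF1 : ∀ x : ℝ, F x ≤ 1 := fun x => hF.1.ge_of_tendsto hF.2.2.2 x
  have hFb0 : ∀ x : ℝ, 0 ≤ Fbar F x := fun x => sub_nonneg.2 (hF1 x)
  have hFb1 : ∀ x : ℝ, Fbar F x ≤ 1 := fun x => by
    have := hF0 x; simp only [Fbar]; linarith
  have hFbm : Measurable (Fbar F) := measurable_const.sub hF.1.measurable
  -- Fbar is at least 1/2 near 0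
  have hhalf : ∃ d : ℝ, 0 < d ∧ ∀ t, 0 ≤ t → t ≤ d → 1/2 ≤ Fbar F t := by
    have h0 : F 0 = 0 := hF.2.2.1 0 le_rfl
    have hc : Tendsto F (𝓝[Set.Ici 0] 0) (𝓝 0) := by
      have := hF.2.1 0; rwa [ContinuousWithinAt, h0] at this
    have hev : F ⁻¹' (Set.Iio (1/2)) ∈ 𝓝[Set.Ici 0] (0:ℝ) := hc (Iio_mem_nhds (by norm_num))
    rw [Metric.mem_nhdsWithin_iff] at hev
    obtain ⟨d, hd, hsub⟩ := hev
    refine ⟨d/2, by linarith, fun t ht htd => ?_⟩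
    have h1 : t ∈ Metric.ball (0:ℝ) d := by
      rw [Real.ball_eq_Ioo]; constructor <;> [linarith; linarith]
    have h2 : F t < 1/2 := hsub ⟨h1, ht⟩
    simp only [Fbar]; linarith
  -- Continuous extension of g₁
  set G0 : ℝ → ℝ := fun s => g₁ (max s 0) with hG0def
  have hG0cont : Continuous G0 :=
    hgc.comp_continuous (continuous_id.max continuous_const) fun x => le_max_right x 0
  have hG0eq : ∀ s : ℝ, 0 ≤ s → G0 s = g₁ s := fun s hs => by
    simp only [hG0def]; rw [max_eq_left hs]
  -- measurable version of Bop
  set ψ : ℝ → ℝ := fun t => ∫ y : ℝ, Set.indicator {p : ℝ × ℝ | 0 < p.2 ∧ p.2 ≤ p.1}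
      (fun p => G0 (p.1 - p.2) * Fbar F p.2) (t, y) with hψdef
  have hψm : Measurable ψ := by
    have hset : MeasurableSet {p : ℝ × ℝ | 0 < p.2 ∧ p.2 ≤ p.1} := by
      have : {p : ℝ × ℝ | 0 < p.2 ∧ p.2 ≤ p.1}
          = {p : ℝ × ℝ | 0 < p.2} ∩ {p : ℝ × ℝ | p.2 ≤ p.1} := rfl
      rw [this]
      exact (measurableSet_lt measurable_const measurable_snd).inter
        (measurableSet_le measurable_snd measurable_fst)
    have hfm : StronglyMeasurable (Set.indicator {p : ℝ × ℝ | 0 < p.2 ∧ p.2 ≤ p.1}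
        (fun p : ℝ × ℝ => G0 (p.1 - p.2) * Fbar F p.2)) := by
      apply Measurable.stronglyMeasurable
      exact (((hG0cont.comp (continuous_fst.sub continuous_snd)).measurable).mul
        (hFbm.comp measurable_snd)).indicator hset
    exact (hfm.integral_prod_right').measurable
  have hψeq : ∀ t : ℝ, 0 ≤ t → Bop F g₁ t = ψ t := by
    intro t ht
    have h1 : Bop F g₁ t = ∫ y in Set.Ioc (0:ℝ) t, g₁ (t - y) * Fbar F y := by
      rw [Bop, intervalIntegral.integral_of_le ht]
    have h2 : EqOn (fun y => g₁ (t - y) * Fbar F y) (fun y => G0 (t - y) * Fbar F y)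
        (Set.Ioc (0:ℝ) t) := by
      intro y hy
      have h : (0:ℝ) ≤ t - y := by linarith [hy.2]
      show g₁ (t - y) * Fbar F y = G0 (t - y) * Fbar F y
      rw [hG0eq _ h]
    rw [h1, setIntegral_congr_fun measurableSet_Ioc h2, hψdef]
    rw [← MeasureTheory.integral_indicator measurableSet_Ioc]
    congr 1
  -- local boundedness of g₁
  have hGbdd : ∀ u : ℝ, 0 ≤ u → ∃ M : ℝ, 0 ≤ M ∧ ∀ s, 0 ≤ s → s ≤ u → |g₁ s| ≤ M := by
    intro u hu
    obtain ⟨x₀, hx₀, hmax⟩ := isCompact_Icc.exists_isMaxOn (nonempty_Icc.2 hu)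
      ((hG0cont.abs).continuousOn : ContinuousOn (fun s => |G0 s|) (Set.Icc 0 u))
    refine ⟨|G0 x₀|, abs_nonneg _, fun s h1 h2 => ?_⟩
    have h3 : |G0 s| ≤ |G0 x₀| := hmax (⟨h1, h2⟩ : s ∈ Set.Icc 0 u)
    rwa [hG0eq s h1] at h3
  -- the convolution kernel is integrable
  have hfint : ∀ t : ℝ, 0 ≤ t → IntegrableOn (fun y => g₁ (t - y) * Fbar F y)
      (Set.Ioc 0 t) volume := by
    intro t ht
    obtain ⟨M, hM0, hM⟩ := hGbdd t ht
    have hmeas : AEStronglyMeasurable (fun y => g₁ (t - y) * Fbar F y)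
        (volume.restrict (Set.Ioc 0 t)) := by
      have h1 : AEStronglyMeasurable (fun y => G0 (t - y) * Fbar F y)
          (volume.restrict (Set.Ioc 0 t)) :=
        (((hG0cont.comp (continuous_const.sub continuous_id)).measurable).mul
          hFbm).aestronglyMeasurable
      refine h1.congr ((ae_restrict_iff' measurableSet_Ioc).2 (ae_of_all _ fun y hy => ?_))
      have h : (0:ℝ) ≤ t - y := by linarith [hy.2]
      show G0 (t - y) * Fbar F y = g₁ (t - y) * Fbar F y
      rw [hG0eq _ h]
    refine Integrable.mono' (g := fun _ => M) (integrableOn_const measure_Ioc_lt_top.ne)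
      hmeas ?_
    refine (ae_restrict_iff' measurableSet_Ioc).2 (ae_of_all _ fun y hy => ?_)
    have h1 : |g₁ (t - y)| ≤ M := hM (t - y) (by linarith [hy.2]) (by linarith [hy.1])
    have h2 : |Fbar F y| ≤ 1 := abs_le.2 ⟨by linarith [hFb0 y], hFb1 y⟩
    calc ‖g₁ (t - y) * Fbar F y‖ = |g₁ (t - y)| * |Fbar F y| := by
          rw [Real.norm_eq_abs, abs_mul]
    _ ≤ M * 1 := mul_le_mul h1 h2 (abs_nonneg _) hM0
    _ = M := mul_one M
  -- bound on Bop
  have hBople : ∀ u : ℝ, 0 ≤ u → ∃ M, 0 ≤ M ∧ ∀ t, 0 ≤ t → t ≤ u → |Bop F g₁ t| ≤ M * t := by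
    intro u hu
    obtain ⟨M, hM0, hM⟩ := hGbdd u hu
    refine ⟨M, hM0, fun t ht htu => ?_⟩
    have h1 : Bop F g₁ t = ∫ y in Set.Ioc (0:ℝ) t, g₁ (t - y) * Fbar F y := by
      rw [Bop, intervalIntegral.integral_of_le ht]
    have h2 : ‖∫ y in Set.Ioc (0:ℝ) t, g₁ (t - y) * Fbar F y‖
        ≤ M * (volume (Set.Ioc (0:ℝ) t)).toReal := by
      apply norm_setIntegral_le_of_norm_le_const measure_Ioc_lt_top
      · intro y hy
        have hb1 : |g₁ (t - y)| ≤ M := hM (t - y) (by linarith [hy.2]) (by linarith [hy.1, htu])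
        have hb2 : |Fbar F y| ≤ 1 := abs_le.2 ⟨by linarith [hFb0 y], hFb1 y⟩
        calc ‖g₁ (t - y) * Fbar F y‖ = |g₁ (t - y)| * |Fbar F y| := by
              rw [Real.norm_eq_abs, abs_mul]
        _ ≤ M * 1 := mul_le_mul hb1 hb2 (abs_nonneg _) hM0
        _ = M := mul_one M
    rw [h1, ← Real.norm_eq_abs]
    calc ‖∫ y in Set.Ioc (0:ℝ) t, g₁ (t - y) * Fbar F y‖
        ≤ M * (volume (Set.Ioc (0:ℝ) t)).toReal := h2
    _ = M * t := by rw [Real.volume_Ioc, sub_zero, ENNReal.toReal_ofReal ht]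
  -- rpow integrability
  have hrpow_int : ∀ (r u : ℝ), -1 < r → 0 ≤ u →
      IntegrableOn (fun t : ℝ => t ^ r) (Set.Ioc 0 u) volume := fun r u hr hu =>
    (intervalIntegrable_iff_integrableOn_Ioc_of_le hu).1
      (intervalIntegral.intervalIntegrable_rpow' hr)
  -- the Volterra integrand
  set Θ : ℝ → ℝ := fun t => t ^ (γ - 2) * Real.exp (-α / t) * (1 * Fbar F t + Bop F g₁ t)
    with hΘdef
  have hΘaesm : ∀ u : ℝ, 0 ≤ u → AEStronglyMeasurable Θ (volume.restrict (Set.Ioc 0 u)) := by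
    intro u hu
    have h1 : Measurable (fun t : ℝ => t ^ (γ - 2) * Real.exp (-α / t) * (1 * Fbar F t + ψ t)) := by
      refine (((measurable_id.pow measurable_const)).mul
        (Real.measurable_exp.comp (measurable_const.div measurable_id))).mul ?_
      exact (measurable_const.mul hFbm).add hψm
    refine h1.aestronglyMeasurable.congr
      ((ae_restrict_iff' measurableSet_Ioc).2 (ae_of_all _ fun t ht => ?_))
    show t ^ (γ - 2) * Real.exp (-α / t) * (1 * Fbar F t + ψ t) = Θ t
    simp only [hΘdef]
    rw [hψeq t ht.1.le]
  have hΘint : ∀ u : ℝ, 0 ≤ u → IntegrableOn Θ (Set.Ioc 0 u) volume := by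
    intro u hu
    obtain ⟨M, hM0, hM⟩ := hBople u hu
    refine Integrable.mono' (g := fun t => (1 + M * u) * t ^ (γ - 2))
      ((hrpow_int _ u (by linarith) hu).const_mul _) (hΘaesm u hu) ?_
    refine (ae_restrict_iff' measurableSet_Ioc).2 (ae_of_all _ fun t ht => ?_)
    have hB : |1 * Fbar F t + Bop F g₁ t| ≤ 1 + M * u := by
      have h2 := hM t ht.1.le ht.2
      have h3 : |Fbar F t| ≤ 1 := abs_le.2 ⟨by linarith [hFb0 t], hFb1 t⟩
      have h4 : M * t ≤ M * u := mul_le_mul_of_nonneg_left ht.2 hM0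
      calc |1 * Fbar F t + Bop F g₁ t| ≤ |Fbar F t| + |Bop F g₁ t| := by
            rw [one_mul]; exact abs_add_le _ _
      _ ≤ 1 + M * u := add_le_add h3 (h2.trans h4)
    have he1 : Real.exp (-α / t) ≤ 1 := by
      rw [Real.exp_le_one_iff]
      apply div_nonpos_of_nonpos_of_nonneg <;> linarith [ht.1]
    have hrp : (0:ℝ) ≤ t ^ (γ - 2) := Real.rpow_nonneg ht.1.le _
    calc ‖Θ t‖ = t ^ (γ - 2) * Real.exp (-α / t) * |1 * Fbar F t + Bop F g₁ t| := by
          simp only [hΘdef]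
          rw [Real.norm_eq_abs, abs_mul, abs_mul, abs_of_nonneg hrp,
            abs_of_nonneg (Real.exp_pos _).le]
    _ ≤ t ^ (γ - 2) * 1 * (1 + M * u) := by
          apply mul_le_mul (mul_le_mul_of_nonneg_left he1 hrp) hB (abs_nonneg _)
          linarith [mul_le_mul_of_nonneg_left he1 hrp, Real.exp_pos (-α/t),
            mul_nonneg hrp (Real.exp_pos (-α/t)).le]
    _ = (1 + M * u) * t ^ (γ - 2) := by ring
  -- equation in set-integral form
  have heq' : ∀ u : ℝ, 0 < u →
      g₁ u = μ * u ^ (-γ) * Real.exp (α / u) * ∫ t in Set.Ioc (0:ℝ) u, Θ t := by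
    intro u hu
    rw [← intervalIntegral.integral_of_le hu.le]
    exact heq u hu
  -- key upper bound
  have key : ∀ u : ℝ, 0 < u → ∀ A B a b : ℝ, 0 ≤ A → 0 ≤ B →
      0 < γ - 1 + a → 0 < γ - 1 + b →
      (∀ t, t ∈ Set.Ioc (0:ℝ) u → 1 * Fbar F t + Bop F g₁ t ≤ A * t ^ a + B * t ^ b) →
      g₁ u ≤ μ * A / (γ - 1 + a) * u ^ (a - 1) + μ * B / (γ - 1 + b) * u ^ (b - 1) := by
    intro u hu A B a b hA hB hga hgb hW
    have hu' := hu.le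
    set R : ℝ → ℝ := fun t => Real.exp (-α / u) * (A * t ^ (γ - 2 + a) + B * t ^ (γ - 2 + b))
      with hRdef
    have hRint : IntegrableOn R (Set.Ioc 0 u) volume := by
      exact (((hrpow_int _ u (by linarith) hu').const_mul A).add
        ((hrpow_int _ u (by linarith) hu').const_mul B)).const_mul _
    have h1 : ∫ t in Set.Ioc (0:ℝ) u, Θ t ≤ ∫ t in Set.Ioc (0:ℝ) u, R t := by
      refine setIntegral_mono_on (hΘint u hu') hRint measurableSet_Ioc fun t ht => ?_
      have hfeq : t ^ (γ - 2) * Real.exp (-α / u) * (A * t ^ a + B * t ^ b) = R t := by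
        simp only [hRdef]
        rw [Real.rpow_add ht.1 (γ - 2) a, Real.rpow_add ht.1 (γ - 2) b]; ring
      rw [← hfeq]
      have hrp : (0:ℝ) ≤ t ^ (γ - 2) := Real.rpow_nonneg ht.1.le _
      have he1 : Real.exp (-α / t) ≤ Real.exp (-α / u) := by
        rw [Real.exp_le_exp, neg_div, neg_div]
        have := div_le_div_of_nonneg_left hα.le ht.1 ht.2
        linarith
      have hABnn : (0:ℝ) ≤ A * t ^ a + B * t ^ b := by
        have := Real.rpow_nonneg ht.1.le a
        have := Real.rpow_nonneg ht.1.le b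
        positivity
      calc Θ t = t ^ (γ - 2) * Real.exp (-α / t) * (1 * Fbar F t + Bop F g₁ t) := by
            simp only [hΘdef]
      _ ≤ t ^ (γ - 2) * Real.exp (-α / t) * (A * t ^ a + B * t ^ b) :=
            mul_le_mul_of_nonneg_left (hW t ht)
              (mul_nonneg hrp (Real.exp_pos _).le)
      _ ≤ t ^ (γ - 2) * Real.exp (-α / u) * (A * t ^ a + B * t ^ b) :=
            mul_le_mul_of_nonneg_right (mul_le_mul_of_nonneg_left he1 hrp) hABnn
    have h2 : ∫ t in Set.Ioc (0:ℝ) u, R t = Real.exp (-α / u) *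
        (A * (u ^ (γ - 1 + a) / (γ - 1 + a)) + B * (u ^ (γ - 1 + b) / (γ - 1 + b))) := by
      rw [← intervalIntegral.integral_of_le hu']
      simp only [hRdef]
      rw [intervalIntegral.integral_const_mul]
      congr 1
      rw [intervalIntegral.integral_add
        ((intervalIntegral.intervalIntegrable_rpow' (by linarith)).const_mul A)
        ((intervalIntegral.intervalIntegrable_rpow' (by linarith)).const_mul B),
        intervalIntegral.integral_const_mul, intervalIntegral.integral_const_mul,
        integral_rpow (Or.inl (by linarith : (-1:ℝ) < γ - 2 + a)),
        integral_rpow (Or.inl (by linarith : (-1:ℝ) < γ - 2 + b)),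
        Real.zero_rpow (by intro hz; rw [show γ - 2 + a + 1 = γ - 1 + a by ring] at hz; linarith),
        Real.zero_rpow (by intro hz; rw [show γ - 2 + b + 1 = γ - 1 + b by ring] at hz; linarith),
        show γ - 2 + a + 1 = γ - 1 + a by ring, show γ - 2 + b + 1 = γ - 1 + b by ring]
      ring
    have e1 : Real.exp (α / u) * Real.exp (-α / u) = 1 := by
      rw [← Real.exp_add, neg_div]; ring_nf; exact Real.exp_zero
    have e2 : u ^ (-γ) * u ^ (γ - 1 + a) = u ^ (a - 1) := by
      rw [← Real.rpow_add hu]; congr 1; ring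
    have e3 : u ^ (-γ) * u ^ (γ - 1 + b) = u ^ (b - 1) := by
      rw [← Real.rpow_add hu]; congr 1; ring
    calc g₁ u = μ * u ^ (-γ) * Real.exp (α / u) * ∫ t in Set.Ioc (0:ℝ) u, Θ t := heq' u hu
    _ ≤ μ * u ^ (-γ) * Real.exp (α / u) * ∫ t in Set.Ioc (0:ℝ) u, R t := by
        apply mul_le_mul_of_nonneg_left h1
        have := Real.rpow_pos_of_pos hu (-γ)
        have := Real.exp_pos (α / u)
        positivity
    _ = μ * A / (γ - 1 + a) * u ^ (a - 1) + μ * B / (γ - 1 + b) * u ^ (b - 1) := by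
        rw [h2]
        have e4 : μ * u ^ (-γ) * Real.exp (α / u) * (Real.exp (-α / u) *
            (A * (u ^ (γ - 1 + a) / (γ - 1 + a)) + B * (u ^ (γ - 1 + b) / (γ - 1 + b)))) =
            (Real.exp (α / u) * Real.exp (-α / u)) *
            (μ * A / (γ - 1 + a) * (u ^ (-γ) * u ^ (γ - 1 + a)) +
             μ * B / (γ - 1 + b) * (u ^ (-γ) * u ^ (γ - 1 + b))) := by ring
        rw [e4, e1, e2, e3, one_mul]
  -- positivity criterion
  have pos_of : ∀ u : ℝ, 0 < u → (∀ t, t ∈ Set.Ioc (0:ℝ) u → 0 ≤ 1 * Fbar F t + Bop F g₁ t) →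
      ∀ v : ℝ, 0 < v → v ≤ u → (∀ t, t ∈ Set.Ioc (v/2) v → 1/4 ≤ 1 * Fbar F t + Bop F g₁ t) →
      0 < g₁ u := by
    intro u hu hnn v hv hvu hq
    have hΘnn : ∀ t, t ∈ Set.Ioc (0:ℝ) u → 0 ≤ Θ t := fun t ht => by
      simp only [hΘdef]
      exact mul_nonneg (mul_nonneg (Real.rpow_nonneg ht.1.le _) (Real.exp_pos _).le) (hnn t ht)
    set m : ℝ := (v/2) ^ (γ-1) * (1/v) * Real.exp (-(α/(v/2))) * (1/4) with hmdef
    have hv2 : 0 < v/2 := by linarith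
    have hm : 0 < m := by
      have := Real.rpow_pos_of_pos hv2 (γ-1)
      have := Real.exp_pos (-(α/(v/2)))
      simp only [hmdef]; positivity
    have hsub : Set.Ioc (v/2) v ⊆ Set.Ioc (0:ℝ) u := Set.Ioc_subset_Ioc (by linarith) hvu
    have hlow : ∀ t, t ∈ Set.Ioc (v/2) v → m ≤ Θ t := by
      intro t ht
      have ht0 : 0 < t := lt_trans hv2 ht.1
      have h1 : (v/2) ^ (γ-1) ≤ t ^ (γ-1) := Real.rpow_le_rpow hv2.le ht.1.le (by linarith)
      have h2 : (1:ℝ)/v ≤ 1/t := one_div_le_one_div_of_le ht0 ht.2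
      have h3 : Real.exp (-(α/(v/2))) ≤ Real.exp (-α/t) := by
        rw [Real.exp_le_exp, neg_div]
        have := div_le_div_of_nonneg_left hα.le hv2 ht.1.le
        linarith
      have h4 : t ^ (γ-2) = t ^ (γ-1) * (1/t) := by
        rw [show γ-2 = (γ-1) + (-1) by ring, Real.rpow_add ht0, Real.rpow_neg_one, one_div]
      have h5 : 1/4 ≤ 1 * Fbar F t + Bop F g₁ t := hq t ht
      have hrp : (0:ℝ) ≤ t ^ (γ-1) := Real.rpow_nonneg ht0.le _
      calc m = (v/2) ^ (γ-1) * (1/v) * Real.exp (-(α/(v/2))) * (1/4) := by rw [hmdef]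
      _ ≤ t ^ (γ-1) * (1/t) * Real.exp (-α/t) * (1 * Fbar F t + Bop F g₁ t) := by
          apply mul_le_mul
          · apply mul_le_mul
            · exact mul_le_mul h1 h2 (by positivity) hrp
            · exact h3
            · positivity
            · positivity
          · exact h5
          · norm_num
          · positivity
      _ = Θ t := by simp only [hΘdef]; rw [h4]
    have hvol : (volume (Set.Ioc (v/2) v)).toReal = v/2 := by
      rw [Real.volume_Ioc, ENNReal.toReal_ofReal (by linarith)]; ring
    have h5 : m * (v/2) ≤ ∫ t in Set.Ioc (v/2) v, Θ t := by
      have := setIntegral_ge_of_const_le measurableSet_Ioc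
        (by rw [Real.volume_Ioc]; exact ENNReal.ofReal_ne_top) hlow
        ((hΘint u hu.le).mono_set hsub)
      rwa [measureReal_def, hvol, smul_eq_mul, mul_comm] at this
    have h6 : ∫ t in Set.Ioc (v/2) v, Θ t ≤ ∫ t in Set.Ioc (0:ℝ) u, Θ t :=
      setIntegral_mono_set (hΘint u hu.le)
        ((ae_restrict_iff' measurableSet_Ioc).2 (ae_of_all _ hΘnn))
        (HasSubset.Subset.eventuallyLE hsub)
    have h7 : 0 < ∫ t in Set.Ioc (0:ℝ) u, Θ t :=
      lt_of_lt_of_le (by positivity : (0:ℝ) < m * (v/2)) (h5.trans h6)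
    rw [heq' u hu]
    have := Real.rpow_pos_of_pos hu (-γ)
    have := Real.exp_pos (α / u)
    positivity
  -- local positivity near 0
  obtain ⟨d, hd, hdF⟩ := hhalf
  obtain ⟨M₁, hM₁0, hM₁⟩ := hBople 1 zero_le_one
  set v₀ : ℝ := min (min d 1) (1/(4*(M₁+1))) with hv₀def
  have hv₀ : 0 < v₀ := lt_min (lt_min hd one_pos) (by positivity)
  have hv₀d : v₀ ≤ d := le_trans (min_le_left _ _) (min_le_left _ _)
  have hv₀1 : v₀ ≤ 1 := le_trans (min_le_left _ _) (min_le_right _ _)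
  have hv₀M : v₀ ≤ 1/(4*(M₁+1)) := min_le_right _ _
  have hq : ∀ t, t ∈ Set.Ioc (0:ℝ) v₀ → 1/4 ≤ 1 * Fbar F t + Bop F g₁ t := by
    intro t ht
    have h1 : 1/2 ≤ Fbar F t := hdF t ht.1.le (le_trans ht.2 hv₀d)
    have h2 : |Bop F g₁ t| ≤ M₁ * t := hM₁ t ht.1.le (le_trans ht.2 hv₀1)
    have h3 : M₁ * t ≤ 1/4 := by
      have htb : t ≤ 1/(4*(M₁+1)) := le_trans ht.2 hv₀M
      calc M₁ * t ≤ M₁ * (1/(4*(M₁+1))) := mul_le_mul_of_nonneg_left htb hM₁0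
      _ ≤ 1/4 := by
          rw [mul_one_div, div_le_div_iff₀ (by positivity) (by norm_num)]
          nlinarith
    have := abs_le.1 h2
    rw [one_mul]
    linarith
  have hposlocal : ∀ u, 0 < u → u ≤ v₀ → 0 < g₁ u := by
    intro u hu huv
    refine pos_of u hu (fun t ht => ?_) u hu le_rfl (fun t ht => ?_)
    · have := hq t (Set.Ioc_subset_Ioc_right huv ht)
      linarith
    · exact hq t ⟨lt_trans (by linarith) ht.1, le_trans ht.2 huv⟩
  -- g₁ 0 is nonnegative (right limit)
  have hg₁0 : 0 ≤ g₁ 0 := by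
    have hlim : Tendsto g₁ (𝓝[Set.Ioi 0] 0) (𝓝 (g₁ 0)) :=
      (hgc 0 (self_mem_Ici)).mono_left (nhdsWithin_mono 0 Set.Ioi_subset_Ici_self)
    refine ge_of_tendsto hlim ?_
    filter_upwards [eventually_nhdsWithin_of_eventually_nhds (eventually_lt_nhds hv₀),
      eventually_mem_nhdsWithin] with x h1 h2
    exact (hposlocal x h2 h1.le).le
  -- global positivity
  have hpos : ∀ u : ℝ, 0 < u → 0 < g₁ u := by
    by_contra hcon
    push_neg at hcon
    obtain ⟨w, hw0, hwle⟩ := hcon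
    have hwv₀ : v₀ ≤ w := by
      by_contra h
      push_neg at h
      exact absurd hwle (not_le.2 (hposlocal w hw0 h.le))
    set S : Set ℝ := {x | v₀ ≤ x ∧ G0 x ≤ 0} with hSdef
    have hSne : S.Nonempty := ⟨w, hwv₀, by rw [hG0eq w hw0.le]; exact hwle⟩
    have hSclosed : IsClosed S := by
      have : S = Set.Ici v₀ ∩ G0 ⁻¹' (Set.Iic 0) := rfl
      rw [this]
      exact isClosed_Ici.inter (isClosed_Iic.preimage hG0cont)
    have hSbdd : BddBelow S := ⟨v₀, fun x hx => hx.1⟩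
    set u₀ : ℝ := sInf S with hu₀def
    have hu₀S : u₀ ∈ S := hSclosed.csInf_mem hSne hSbdd
    have hu₀v : v₀ ≤ u₀ := hu₀S.1
    have hu₀pos : 0 < u₀ := lt_of_lt_of_le hv₀ hu₀v
    have hglt : ∀ s, 0 < s → s < u₀ → 0 < g₁ s := by
      intro s hs hsu
      rcases le_or_gt s v₀ with h | h
      · exact hposlocal s hs h
      · by_contra hneg
        push_neg at hneg
        have hmem : s ∈ S := ⟨h.le, by rw [hG0eq s hs.le]; exact hneg⟩
        exact absurd (csInf_le hSbdd hmem) (not_le.2 hsu)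
    have hBnn : ∀ t, 0 < t → t ≤ u₀ → 0 ≤ Bop F g₁ t := by
      intro t ht htu
      rw [Bop, intervalIntegral.integral_of_le ht.le]
      refine setIntegral_nonneg measurableSet_Ioc fun y hy => ?_
      refine mul_nonneg ?_ (hFb0 y)
      rcases eq_or_lt_of_le (hy.2 : y ≤ t) with he | hlt'
      · rw [← he, sub_self]; exact hg₁0
      · have h1 : 0 < t - y := by linarith
        exact (hglt (t - y) h1 (by linarith [hy.1])).le
    have hnn : ∀ t, t ∈ Set.Ioc (0:ℝ) u₀ → 0 ≤ 1 * Fbar F t + Bop F g₁ t := fun t ht => by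
      rw [one_mul]
      exact add_nonneg (hFb0 t) (hBnn t ht.1 ht.2)
    have hgt : 0 < g₁ u₀ :=
      pos_of u₀ hu₀pos hnn v₀ hv₀ hu₀v (fun t ht => hq t ⟨by linarith [ht.1], ht.2⟩)
    have hle : g₁ u₀ ≤ 0 := by rw [← hG0eq u₀ hu₀pos.le]; exact hu₀S.2
    linarith
  -- Bop is nonnegative
  have hBnn' : ∀ t : ℝ, 0 < t → 0 ≤ Bop F g₁ t := by
    intro t ht
    rw [Bop, intervalIntegral.integral_of_le ht.le]
    refine setIntegral_nonneg measurableSet_Ioc fun y hy => ?_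
    refine mul_nonneg ?_ (hFb0 y)
    rcases eq_or_lt_of_le (hy.2 : y ≤ t) with he | hlt'
    · rw [← he, sub_self]; exact hg₁0
    · exact (hpos (t - y) (by linarith)).le
  -- convolution estimate
  have conv : ∀ δ C' : ℝ, 0 ≤ δ → δ < 1 → 0 ≤ C' → ∀ t : ℝ, 0 < t →
      (∀ s, 0 < s → s ≤ t → g₁ s ≤ C' * s ^ (-δ)) →
      Bop F g₁ t ≤ C' * C₀ * (1/(1-ε) + 1/(1-δ)) * (t/2) ^ (1-δ-ε) := by
    intro δ C' hδ0 hδ1 hC' t ht hb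
    have ht2 : 0 < t/2 := by linarith
    have hsplit : Bop F g₁ t = (∫ y in Set.Ioc (0:ℝ) (t/2), g₁ (t-y) * Fbar F y) +
        ∫ y in Set.Ioc (t/2) t, g₁ (t-y) * Fbar F y := by
      rw [Bop, intervalIntegral.integral_of_le ht.le,
        ← Set.Ioc_union_Ioc_eq_Ioc ht2.le (by linarith : t/2 ≤ t)]
      exact setIntegral_union (Set.Ioc_disjoint_Ioc_of_le le_rfl) measurableSet_Ioc
        ((hfint t ht.le).mono_set (Set.Ioc_subset_Ioc_right (by linarith)))
        ((hfint t ht.le).mono_set (Set.Ioc_subset_Ioc_left ht2.le))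
    have hp1 : (∫ y in Set.Ioc (0:ℝ) (t/2), g₁ (t-y) * Fbar F y) ≤
        C' * (t/2) ^ (-δ) * C₀ * ((t/2) ^ (1-ε) / (1-ε)) := by
      have hmono : ∫ y in Set.Ioo (0:ℝ) (t/2), g₁ (t-y) * Fbar F y ≤
          ∫ y in Set.Ioo (0:ℝ) (t/2), (C' * (t/2) ^ (-δ) * C₀) * y ^ (-ε) := by
        refine setIntegral_mono_on
          (((hfint t ht.le).mono_set (Set.Ioc_subset_Ioc_right (by linarith))).mono_set
            Set.Ioo_subset_Ioc_self)
          (((hrpow_int (-ε) (t/2) (by linarith) ht2.le).mono_set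
            Set.Ioo_subset_Ioc_self).const_mul _)
          measurableSet_Ioo fun y hy => ?_
        have hty : 0 < t - y := by linarith [hy.2]
        have h1 : g₁ (t-y) ≤ C' * (t-y) ^ (-δ) := hb (t-y) hty (by linarith [hy.1])
        have h2 : (t-y) ^ (-δ) ≤ (t/2) ^ (-δ) :=
          Real.rpow_le_rpow_of_nonpos ht2 (by linarith [hy.2]) (by linarith)
        have h3 : Fbar F y ≤ C₀ * y ^ (-ε) := htail y hy.1
        have h4 : (0:ℝ) ≤ C' * (t/2) ^ (-δ) :=
          mul_nonneg hC' (Real.rpow_nonneg ht2.le _)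
        calc g₁ (t-y) * Fbar F y ≤ (C' * (t/2) ^ (-δ)) * (C₀ * y ^ (-ε)) :=
              mul_le_mul (h1.trans (mul_le_mul_of_nonneg_left h2 hC')) h3 (hFb0 y) h4
        _ = (C' * (t/2) ^ (-δ) * C₀) * y ^ (-ε) := by ring
      have heval : ∫ y in Set.Ioo (0:ℝ) (t/2), (C' * (t/2) ^ (-δ) * C₀) * y ^ (-ε) =
          C' * (t/2) ^ (-δ) * C₀ * ((t/2) ^ (1-ε) / (1-ε)) := by
        rw [← integral_Ioc_eq_integral_Ioo, ← intervalIntegral.integral_of_le ht2.le,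
          intervalIntegral.integral_const_mul,
          integral_rpow (Or.inl (by linarith : (-1:ℝ) < -ε)),
          Real.zero_rpow (by intro hz; rw [show -ε + 1 = 1 - ε by ring] at hz; linarith),
          show -ε + 1 = 1 - ε by ring]
        ring
      calc (∫ y in Set.Ioc (0:ℝ) (t/2), g₁ (t-y) * Fbar F y)
          = ∫ y in Set.Ioo (0:ℝ) (t/2), g₁ (t-y) * Fbar F y := integral_Ioc_eq_integral_Ioo
      _ ≤ ∫ y in Set.Ioo (0:ℝ) (t/2), (C' * (t/2) ^ (-δ) * C₀) * y ^ (-ε) := hmono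
      _ = C' * (t/2) ^ (-δ) * C₀ * ((t/2) ^ (1-ε) / (1-ε)) := heval
    have hp2 : (∫ y in Set.Ioc (t/2) t, g₁ (t-y) * Fbar F y) ≤
        C' * C₀ * (t/2) ^ (-ε) * ((t/2) ^ (1-δ) / (1-δ)) := by
      have hIrpow : IntervalIntegrable (fun y => (t - y) ^ (-δ)) volume (t/2) t := by
        have h := ((intervalIntegral.intervalIntegrable_rpow'
          (by linarith : (-1:ℝ) < -δ)).comp_sub_left t : IntervalIntegrable
            (fun x => (t - x) ^ (-δ)) volume (t - 0) (t - t/2))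
        rw [show t - 0 = t by ring, show t - t/2 = t/2 by ring] at h
        exact h.symm
      have hmono : ∫ y in Set.Ioo (t/2) t, g₁ (t-y) * Fbar F y ≤
          ∫ y in Set.Ioo (t/2) t, (C' * C₀ * (t/2) ^ (-ε)) * (t - y) ^ (-δ) := by
        refine setIntegral_mono_on
          (((hfint t ht.le).mono_set (Set.Ioc_subset_Ioc_left ht2.le)).mono_set
            Set.Ioo_subset_Ioc_self)
          ((((intervalIntegrable_iff_integrableOn_Ioc_of_le (by linarith)).1
            hIrpow).mono_set Set.Ioo_subset_Ioc_self).const_mul _)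
          measurableSet_Ioo fun y hy => ?_
        have hty : 0 < t - y := by linarith [hy.2]
        have h1 : g₁ (t-y) ≤ C' * (t-y) ^ (-δ) := hb (t-y) hty (by linarith [hy.1])
        have h3 : Fbar F y ≤ C₀ * (t/2) ^ (-ε) := by
          refine (htail y (by linarith [hy.1])).trans ?_
          exact mul_le_mul_of_nonneg_left
            (Real.rpow_le_rpow_of_nonpos ht2 hy.1.le (by linarith)) hC₀.le
        calc g₁ (t-y) * Fbar F y ≤ (C' * (t-y) ^ (-δ)) * (C₀ * (t/2) ^ (-ε)) :=
              mul_le_mul h1 h3 (hFb0 y)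
                (mul_nonneg hC' (Real.rpow_nonneg hty.le _))
        _ = (C' * C₀ * (t/2) ^ (-ε)) * (t - y) ^ (-δ) := by ring
      have heval : ∫ y in Set.Ioo (t/2) t, (C' * C₀ * (t/2) ^ (-ε)) * (t - y) ^ (-δ) =
          C' * C₀ * (t/2) ^ (-ε) * ((t/2) ^ (1-δ) / (1-δ)) := by
        rw [← integral_Ioc_eq_integral_Ioo, ← intervalIntegral.integral_of_le (by linarith : t/2 ≤ t),
          intervalIntegral.integral_const_mul]
        have hcs : ∫ y in (t/2)..t, (t - y) ^ (-δ) = ∫ x in (t - t)..(t - t/2), x ^ (-δ) :=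
          intervalIntegral.integral_comp_sub_left (fun x => x ^ (-δ)) t
        rw [hcs, show t - t = (0:ℝ) by ring, show t - t/2 = t/2 by ring,
          integral_rpow (Or.inl (by linarith : (-1:ℝ) < -δ)),
          Real.zero_rpow (by intro hz; rw [show -δ + 1 = 1 - δ by ring] at hz; linarith),
          show -δ + 1 = 1 - δ by ring]
        ring
      calc (∫ y in Set.Ioc (t/2) t, g₁ (t-y) * Fbar F y)
          = ∫ y in Set.Ioo (t/2) t, g₁ (t-y) * Fbar F y := integral_Ioc_eq_integral_Ioo
      _ ≤ ∫ y in Set.Ioo (t/2) t, (C' * C₀ * (t/2) ^ (-ε)) * (t - y) ^ (-δ) := hmono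
      _ = C' * C₀ * (t/2) ^ (-ε) * ((t/2) ^ (1-δ) / (1-δ)) := heval
    have e1 : (t/2) ^ (-δ) * (t/2) ^ (1-ε) = (t/2) ^ (1-δ-ε) := by
      rw [← Real.rpow_add ht2]; congr 1; ring
    have e2 : (t/2) ^ (-ε) * (t/2) ^ (1-δ) = (t/2) ^ (1-δ-ε) := by
      rw [← Real.rpow_add ht2]; congr 1; ring
    calc Bop F g₁ t = _ + _ := hsplit
    _ ≤ C' * (t/2) ^ (-δ) * C₀ * ((t/2) ^ (1-ε) / (1-ε)) +
        C' * C₀ * (t/2) ^ (-ε) * ((t/2) ^ (1-δ) / (1-δ)) := add_le_add hp1 hp2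
    _ = C' * C₀ * (1/(1-ε) + 1/(1-δ)) * (t/2) ^ (1-δ-ε) := by
        have hne1 : (1:ℝ) - ε ≠ 0 := by intro hz; linarith
        have hne2 : (1:ℝ) - δ ≠ 0 := by intro hz; linarith
        linear_combination (C' * C₀ / (1 - ε)) * e1 + (C' * C₀ / (1 - δ)) * e2
  -- the main recursive estimate
  have main : ∀ δ C' : ℝ, 0 ≤ δ → δ < 1 → 0 ≤ C' → ∀ u : ℝ, 0 < u →
      (∀ s, 0 < s → s ≤ u → g₁ s ≤ C' * s ^ (-δ)) →
      g₁ u ≤ μ * C₀ / (γ - 1 - ε) * u ^ (-ε - 1) +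
        μ * (C' * C₀ * (1/(1-ε) + 1/(1-δ)) * 2 ^ (δ + ε - 1)) / (γ - δ - ε) * u ^ (-δ - ε) := by
    intro δ C' hδ0 hδ1 hC' u hu hb
    have hgde : 0 < γ - δ - ε := by linarith
    have hW : ∀ t, t ∈ Set.Ioc (0:ℝ) u → 1 * Fbar F t + Bop F g₁ t ≤
        C₀ * t ^ (-ε) + (C' * C₀ * (1/(1-ε) + 1/(1-δ)) * 2 ^ (δ + ε - 1)) * t ^ (1-δ-ε) := by
      intro t ht
      have h1 := htail t ht.1
      have h2 := conv δ C' hδ0 hδ1 hC' t ht.1 (fun s hs hst => hb s hs (le_trans hst ht.2))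
      have h3 : (t/2) ^ (1-δ-ε) = 2 ^ (δ+ε-1) * t ^ (1-δ-ε) := by
        rw [div_eq_mul_inv, Real.mul_rpow ht.1.le (by norm_num),
          Real.inv_rpow (by norm_num), ← Real.rpow_neg (by norm_num),
          show -(1-δ-ε) = δ+ε-1 by ring]
        ring
      rw [one_mul]
      calc Fbar F t + Bop F g₁ t
          ≤ C₀ * t ^ (-ε) + C' * C₀ * (1/(1-ε) + 1/(1-δ)) * (t/2) ^ (1-δ-ε) := add_le_add h1 h2
      _ = C₀ * t ^ (-ε) + (C' * C₀ * (1/(1-ε) + 1/(1-δ)) * 2 ^ (δ+ε-1)) * t ^ (1-δ-ε) := by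
          rw [h3]; ring
    have hBpos : (0:ℝ) ≤ C' * C₀ * (1/(1-ε) + 1/(1-δ)) * 2 ^ (δ + ε - 1) := by
      have h2p : (0:ℝ) < 2 ^ (δ + ε - 1) := Real.rpow_pos_of_pos two_pos _
      have hs1 : (0:ℝ) < 1/(1-ε) := by
        apply div_pos one_pos; linarith
      have hs2 : (0:ℝ) < 1/(1-δ) := by
        apply div_pos one_pos; linarith
      positivity
    have h := key u hu C₀ (C' * C₀ * (1/(1-ε) + 1/(1-δ)) * 2 ^ (δ + ε - 1)) (-ε) (1-δ-ε)
      hC₀.le hBpos (by linarith) (by linarith) hW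
    rw [show γ - 1 + -ε = γ - 1 - ε by ring, show γ - 1 + (1-δ-ε) = γ - δ - ε by ring,
      show -ε - 1 = -ε - 1 by ring, show 1-δ-ε - 1 = -δ - ε by ring] at h
    exact h
  -- boundedness
  set K₁ : ℝ := μ * C₀ / (γ - 1 - ε) with hK₁def
  have hK₁ : 0 < K₁ := div_pos (mul_pos hμ hC₀) hγε
  set K₂ : ℝ := μ * (C₀ * (1/(1-ε) + 1/(1-(0:ℝ))) * 2 ^ ((0:ℝ) + ε - 1)) / (γ - 0 - ε)
    with hK₂def
  have hK₂ : 0 < K₂ := by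
    have h2p : (0:ℝ) < 2 ^ ((0:ℝ) + ε - 1) := Real.rpow_pos_of_pos two_pos _
    have hs1 : (0:ℝ) < 1/(1-ε) := div_pos one_pos (by linarith)
    have hs2 : (0:ℝ) < 1/(1-(0:ℝ)) := by norm_num
    have hd : (0:ℝ) < γ - 0 - ε := by linarith
    rw [hK₂def]
    exact div_pos (mul_pos hμ (mul_pos (mul_pos hC₀ (by linarith)) h2p)) hd
  set u₁ : ℝ := max 1 ((2*K₂) ^ (1/ε)) with hu₁def
  have hu₁1 : (1:ℝ) ≤ u₁ := le_max_left _ _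
  have hu₁ : ∀ x : ℝ, u₁ ≤ x → K₂ * x ^ (-ε) ≤ 1/2 := by
    intro x hx
    have hx1 : (1:ℝ) ≤ x := le_trans hu₁1 hx
    have hx0 : (0:ℝ) < x := by linarith
    have h2K : (0:ℝ) ≤ 2*K₂ := by linarith
    have h1 : (2*K₂) ^ ((1:ℝ)/ε) ≤ x := le_trans (le_trans (le_max_right _ _) hx) le_rfl
    have h2 : 2*K₂ ≤ x ^ ε := by
      have h3 := Real.rpow_le_rpow (Real.rpow_nonneg h2K _) h1 hε0.le
      rwa [← Real.rpow_mul h2K, one_div_mul_cancel hε0.ne', Real.rpow_one] at h3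
    have hxε : (0:ℝ) < x ^ ε := Real.rpow_pos_of_pos hx0 ε
    rw [Real.rpow_neg hx0.le]
    have h4 : K₂ ≤ x ^ ε / 2 := by linarith
    calc K₂ * (x ^ ε)⁻¹ ≤ (x ^ ε / 2) * (x ^ ε)⁻¹ :=
          mul_le_mul_of_nonneg_right h4 (inv_nonneg.2 hxε.le)
    _ = 1/2 := by field_simp
  obtain ⟨x₀, hx₀mem, hx₀max⟩ := isCompact_Icc.exists_isMaxOn
    (nonempty_Icc.2 (by linarith : (0:ℝ) ≤ u₁)) hG0cont.continuousOn
  have claim : ∀ T, u₁ ≤ T → ∀ s, 0 ≤ s → s ≤ T → g₁ s ≤ max (G0 x₀) (2*K₁) := by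
    intro T hT s hs0 hsT
    obtain ⟨w, hwmem, hwmax⟩ := isCompact_Icc.exists_isMaxOn
      (nonempty_Icc.2 (by linarith : (0:ℝ) ≤ T)) hG0cont.continuousOn
    have hsw : g₁ s ≤ G0 w := by
      rw [← hG0eq s hs0]
      exact hwmax (⟨hs0, hsT⟩ : s ∈ Set.Icc 0 T)
    rcases le_or_gt w u₁ with hw | hw
    · have hwx : G0 w ≤ G0 x₀ := hx₀max (⟨hwmem.1, hw⟩ : w ∈ Set.Icc 0 u₁)
      exact le_trans hsw (le_trans hwx (le_max_left _ _))
    · have hw0 : (0:ℝ) < w := by linarith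
      have hGw : 0 < G0 w := by rw [hG0eq w hw0.le]; exact hpos w hw0
      have hb : ∀ r, 0 < r → r ≤ w → g₁ r ≤ G0 w * r ^ (-(0:ℝ)) := by
        intro r h1 h2
        rw [neg_zero, Real.rpow_zero, mul_one, ← hG0eq r h1.le]
        exact hwmax (⟨h1.le, by linarith [hwmem.2]⟩ : r ∈ Set.Icc 0 T)
      have h := main 0 (G0 w) le_rfl (by norm_num) hGw.le w hw0 hb
      have hcoef : μ * (G0 w * C₀ * (1/(1-ε) + 1/(1-(0:ℝ))) * 2 ^ ((0:ℝ) + ε - 1)) / (γ - 0 - ε)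
          = G0 w * K₂ := by rw [hK₂def]; ring
      rw [hcoef, show -(0:ℝ) - ε = -ε by ring] at h
      have hA : K₁ * w ^ (-ε - 1) ≤ K₁ := by
        have := Real.rpow_le_one_of_one_le_of_nonpos (by linarith : (1:ℝ) ≤ w)
          (by linarith : -ε - 1 ≤ 0)
        nlinarith
      have hB : G0 w * K₂ * w ^ (-ε) ≤ G0 w * (1/2) := by
        have h5 := hu₁ w hw.le
        have h6 : (0:ℝ) ≤ w ^ (-ε) := Real.rpow_nonneg hw0.le _
        calc G0 w * K₂ * w ^ (-ε) = G0 w * (K₂ * w ^ (-ε)) := by ring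
        _ ≤ G0 w * (1/2) := mul_le_mul_of_nonneg_left h5 hGw.le
      have h7 : g₁ w = G0 w := (hG0eq w hw0.le).symm
      rw [h7] at h
      have h8 : G0 w ≤ 2*K₁ := by nlinarith
      exact le_trans hsw (le_trans h8 (le_max_right _ _))
  set M : ℝ := max (G0 x₀) (2*K₁) with hMdef
  have hMpos : 0 < M := lt_of_lt_of_le (by linarith) (le_max_right _ _)
  have hM : ∀ s, 0 ≤ s → g₁ s ≤ M := fun s hs =>
    claim (max s u₁) (le_max_right _ _) s hs (le_max_left _ _)
  -- one bootstrap step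
  have step : ∀ ρ C : ℝ, 0 ≤ ρ → ρ < 1 → 0 < C → (∀ s, 0 < s → g₁ s ≤ C * s ^ (-ρ)) →
      ∀ ρ' : ℝ, 0 ≤ ρ' → ρ' ≤ ρ + ε → ρ' ≤ 1 + ε →
      ∃ C2 : ℝ, 0 < C2 ∧ ∀ s, 0 < s → g₁ s ≤ C2 * s ^ (-ρ') := by
    intro ρ C hρ0 hρ1 hC hb ρ' h1 h2 h3
    have hKpos : 0 < μ * (C * C₀ * (1/(1-ε) + 1/(1-ρ)) * 2 ^ (ρ + ε - 1)) / (γ - ρ - ε) := by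
      have h2p : (0:ℝ) < 2 ^ (ρ + ε - 1) := Real.rpow_pos_of_pos two_pos _
      have hs1 : (0:ℝ) < 1/(1-ε) := div_pos one_pos (by linarith)
      have hs2 : (0:ℝ) < 1/(1-ρ) := div_pos one_pos (by linarith)
      have hd : (0:ℝ) < γ - ρ - ε := by linarith
      exact div_pos (mul_pos hμ (mul_pos (mul_pos (mul_pos hC hC₀) (by linarith)) h2p)) hd
    refine ⟨K₁ + μ * (C * C₀ * (1/(1-ε) + 1/(1-ρ)) * 2 ^ (ρ + ε - 1)) / (γ - ρ - ε) + M,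
      by linarith, fun s hs => ?_⟩
    set K : ℝ := μ * (C * C₀ * (1/(1-ε) + 1/(1-ρ)) * 2 ^ (ρ + ε - 1)) / (γ - ρ - ε) with hKdef
    have hsρ : (0:ℝ) ≤ s ^ (-ρ') := Real.rpow_nonneg hs.le _
    rcases le_or_gt 1 s with hs1 | hs1
    · have h := main ρ C hρ0 hρ1 hC.le s hs (fun r hr _ => hb r hr)
      rw [← hKdef] at h
      have e1 : s ^ (-ε - 1) ≤ s ^ (-ρ') := Real.rpow_le_rpow_of_exponent_le hs1 (by linarith)
      have e2 : s ^ (-ρ - ε) ≤ s ^ (-ρ') := Real.rpow_le_rpow_of_exponent_le hs1 (by linarith)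
      calc g₁ s ≤ K₁ * s ^ (-ε - 1) + K * s ^ (-ρ - ε) := h
      _ ≤ K₁ * s ^ (-ρ') + K * s ^ (-ρ') := add_le_add
            (mul_le_mul_of_nonneg_left e1 hK₁.le) (mul_le_mul_of_nonneg_left e2 hKpos.le)
      _ ≤ (K₁ + K + M) * s ^ (-ρ') := by nlinarith
    · have hup : 1 ≤ s ^ (-ρ') :=
        Real.one_le_rpow_of_pos_of_le_one_of_nonpos hs hs1.le (by linarith)
      calc g₁ s ≤ M := hM s hs.le
      _ = M * 1 := (mul_one M).symm
      _ ≤ M * s ^ (-ρ') := mul_le_mul_of_nonneg_left hup hMpos.le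
      _ ≤ (K₁ + K + M) * s ^ (-ρ') := mul_le_mul_of_nonneg_right (by linarith) hsρ
  -- iterate
  have hQ : ∀ k : ℕ, ∃ C2 : ℝ, 0 < C2 ∧ ∀ s, 0 < s →
      g₁ s ≤ C2 * s ^ (-min (k * ε) (1 - ε/2)) := by
    intro k
    induction k with
    | zero =>
      refine ⟨M, hMpos, fun s hs => ?_⟩
      rw [show min ((0:ℕ) * ε) (1 - ε/2) = 0 by
        rw [Nat.cast_zero, zero_mul]; exact min_eq_left (by linarith)]
      rw [neg_zero, Real.rpow_zero, mul_one]
      exact hM s hs.le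
    | succ k ih =>
      obtain ⟨C2, hC2, hbk⟩ := ih
      have hρ0 : 0 ≤ min (k * ε) (1 - ε/2) := le_min (by positivity) (by linarith)
      have hρ1 : min (k * ε) (1 - ε/2) < 1 := lt_of_le_of_lt (min_le_right _ _) (by linarith)
      have hr0 : 0 ≤ min ((k+1 : ℕ) * ε) (1 - ε/2) := le_min (by positivity) (by linarith)
      have hr1 : min ((k+1 : ℕ) * ε) (1 - ε/2) ≤ min (k * ε) (1 - ε/2) + ε := by
        rw [← min_add_add_right]
        refine le_min ?_ ?_
        · exact (min_le_left _ _).trans (by push_cast; linarith)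
        · exact (min_le_right _ _).trans (by linarith)
      have hr2 : min ((k+1 : ℕ) * ε) (1 - ε/2) ≤ 1 + ε :=
        (min_le_right _ _).trans (by linarith)
      exact step _ C2 hρ0 hρ1 hC2 hbk _ hr0 hr1 hr2
  -- conclude the decay estimate
  obtain ⟨n, hn⟩ := exists_nat_ge ((1 - ε/2)/ε)
  obtain ⟨Cd, hCd, hbd⟩ := hQ n
  have hmin : min ((n:ℝ) * ε) (1 - ε/2) = 1 - ε/2 := by
    apply min_eq_right
    rw [div_le_iff₀ hε0] at hn
    linarith
  rw [hmin] at hbd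
  have hbd' : ∀ s, 0 < s → g₁ s ≤ Cd * s ^ (-(1 - ε/2)) := hbd
  obtain ⟨Cf, hCf, hbf⟩ := step (1 - ε/2) Cd (by linarith) (by linarith) hCd hbd'
    (1 + ε/2) (by linarith) (by linarith) (by linarith)
  -- integrability
  have hint1 : IntegrableOn g₁ (Set.Ioc 0 1) volume :=
    (hG0cont.integrableOn_Ioc).congr_fun (fun x hx => hG0eq x hx.1.le) measurableSet_Ioc
  have hint2 : IntegrableOn g₁ (Set.Ioi 1) volume := by
    refine Integrable.mono'
      ((integrableOn_Ioi_rpow_of_lt (by linarith : -(1+ε/2) < -1) one_pos).const_mul Cf) ?_ ?_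
    · refine (hG0cont.aestronglyMeasurable.restrict).congr
        ((ae_restrict_iff' measurableSet_Ioi).2 (ae_of_all _ fun x hx => ?_))
      exact hG0eq x (by linarith [Set.mem_Ioi.1 hx])
    · refine (ae_restrict_iff' measurableSet_Ioi).2 (ae_of_all _ fun x hx => ?_)
      have hx0 : (0:ℝ) < x := lt_trans one_pos hx
      rw [Real.norm_eq_abs, abs_of_nonneg (hpos x hx0).le]
      exact hbf x hx0
  have hintg : IntegrableOn g₁ (Set.Ioi 0) volume := by
    rw [← Set.Ioc_union_Ioi_eq_Ioi (by norm_num : (0:ℝ) ≤ 1)]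
    exact hint1.union hint2
  -- positivity of I₁
  have hI₁pos : 0 < I₁ := by
    obtain ⟨z, hzmem, hzmin⟩ := isCompact_Icc.exists_isMinOn
      (nonempty_Icc.2 (by norm_num : (1:ℝ) ≤ 2)) hG0cont.continuousOn
    have hz1 : (1:ℝ) ≤ z := hzmem.1
    have hz0 : 0 < g₁ z := hpos z (by linarith)
    have hsub12 : Set.Ioc (1:ℝ) 2 ⊆ Set.Ioi (0:ℝ) := fun x hx => lt_trans one_pos hx.1
    have h1 : g₁ z * (volume (Set.Ioc (1:ℝ) 2)).toReal ≤ ∫ y in Set.Ioc (1:ℝ) 2, g₁ y := by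
      rw [mul_comm, ← smul_eq_mul, ← measureReal_def]
      refine setIntegral_ge_of_const_le measurableSet_Ioc
        (by rw [Real.volume_Ioc]; exact ENNReal.ofReal_ne_top) (fun x hx => ?_)
        (hintg.mono_set hsub12)
      have h2 : G0 z ≤ G0 x := hzmin (⟨hx.1.le, hx.2⟩ : x ∈ Set.Icc 1 2)
      rwa [hG0eq z (by linarith), hG0eq x (by linarith [hx.1])] at h2
    have h3 : ∫ y in Set.Ioc (1:ℝ) 2, g₁ y ≤ ∫ y in Set.Ioi (0:ℝ), g₁ y :=
      setIntegral_mono_set hintg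
        ((ae_restrict_iff' measurableSet_Ioi).2 (ae_of_all _ fun x hx => (hpos x hx).le))
        (HasSubset.Subset.eventuallyLE hsub12)
    have h4 : (volume (Set.Ioc (1:ℝ) 2)).toReal = 1 := by
      rw [Real.volume_Ioc]
      norm_num
    rw [h4, mul_one] at h1
    rw [hI₁]
    linarith
  have hI₁mem : (1 / (1 + I₁)) ∈ Set.Ioo (0:ℝ) 1 := by
    constructor
    · exact div_pos one_pos (by linarith)
    · rw [div_lt_one (by linarith)]; linarith
  -- interval integrability
  have hii : ∀ a b : ℝ, 0 ≤ a → a ≤ b → IntervalIntegrable g₁ volume a b := fun a b ha hab =>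
    (intervalIntegrable_iff_integrableOn_Ioc_of_le hab).2
      (hintg.mono_set (fun x hx => lt_of_le_of_lt ha hx.1))
  -- strict monotonicity
  have hGmono : StrictMonoOn G (Set.Ici 0) := by
    intro x hx y hy hxy
    rw [hG x, hG y]
    have hx' : (0:ℝ) ≤ x := hx
    have hadd : (∫ t in (0:ℝ)..x, g₁ t) + ∫ t in x..y, g₁ t = ∫ t in (0:ℝ)..y, g₁ t :=
      intervalIntegral.integral_add_adjacent_intervals (hii 0 x le_rfl hx') (hii x y hx' hxy.le)
    have hpos' : 0 < ∫ t in x..y, g₁ t :=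
      intervalIntegral.intervalIntegral_pos_of_pos_on (hii x y hx' hxy.le)
        (fun t ht => hpos t (lt_of_le_of_lt hx' ht.1)) hxy
    apply mul_lt_mul_of_pos_left ?_ hI₁mem.1
    rw [← hadd]
    linarith
  -- value at 0
  have hGzero : G 0 = 1 / (1 + I₁) := by
    rw [hG 0, intervalIntegral.integral_same]
    ring
  -- limit at infinity
  have htend : Tendsto G atTop (𝓝 1) := by
    have h1 : Tendsto (fun u => ∫ t in (0:ℝ)..u, g₁ t) atTop (𝓝 I₁) := by
      rw [hI₁]
      exact intervalIntegral_tendsto_integral_Ioi 0 hintg tendsto_id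
    have h2 : Tendsto (fun u => (1 / (1 + I₁)) * (1 + ∫ t in (0:ℝ)..u, g₁ t)) atTop
        (𝓝 ((1 / (1 + I₁)) * (1 + I₁))) := (tendsto_const_nhds.add h1).const_mul _
    have h3 : (1 / (1 + I₁)) * (1 + I₁) = 1 := by
      field_simp
    have h4 : G = fun u => (1 / (1 + I₁)) * (1 + ∫ t in (0:ℝ)..u, g₁ t) := funext hG
    rw [h3] at h2
    rwa [h4]
  exact ⟨hintg, hI₁mem, hGmono, hGzero, htend⟩
end

section
/- Almost-everywhere differential equation: let g be a continuous solution of the Volterra equation (★) on [0, ∞) that is bounded. Then g is locally absolutely continuous on (0, ∞): there exists a locally Lebesgue-integrable function h : (0, ∞) → ℝ such that g(b) − g(a) = ∫ₐᵇ h(t) dt for all 0 < a < b, and for almost every u > 0 (with h(u) serving as the derivative g′(u)) the identity u² h(u) + (γ u + α) g(u) = μ Φ₀ F̄(u) + μ (Bg)(u) holds. -/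
open MeasureTheory Filter Set Topology

lemma Fbar_mem {F : ℝ → ℝ} (hF : IsCDF F) (x : ℝ) : Fbar F x ∈ Set.Icc (0:ℝ) 1 := by
  obtain ⟨hmono, -, h0, htop⟩ := hF
  constructor
  · have : F x ≤ 1 := hmono.ge_of_tendsto htop x
    simp [Fbar]; linarith
  · have : 0 ≤ F x := by
      have := h0 0 le_rfl
      calc (0:ℝ) = F (min x 0) := by rw [h0 _ (min_le_right _ _)]
      _ ≤ F x := hmono (min_le_left _ _)
    simp [Fbar]; linarith

lemma Fbar_abs_le {F : ℝ → ℝ} (hF : IsCDF F) (x : ℝ) : |Fbar F x| ≤ 1 := by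
  have := Fbar_mem hF x
  rw [abs_le]; constructor <;> [linarith [this.1]; exact this.2]

lemma Fbar_measurable {F : ℝ → ℝ} (hF : IsCDF F) : Measurable (Fbar F) :=
  measurable_const.sub hF.1.measurable

lemma Bop_abs_le {F g : ℝ → ℝ} (hF : IsCDF F) {M : ℝ} (hM : ∀ u, 0 ≤ u → |g u| ≤ M)
    {t : ℝ} (ht : 0 ≤ t) : |Bop F g t| ≤ M * t := by
  have := intervalIntegral.norm_integral_le_of_norm_le_const (C := M)
    (f := fun y => g (t - y) * Fbar F y) (a := (0:ℝ)) (b := t) ?_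
  · simpa [Bop, abs_of_nonneg ht] using this
  · intro y hy
    rw [Set.uIoc_of_le ht] at hy
    have h1 : |g (t - y)| ≤ M := hM _ (by linarith [hy.1, hy.2])
    have h2 : |Fbar F y| ≤ 1 := Fbar_abs_le hF y
    calc ‖g (t - y) * Fbar F y‖ = |g (t - y)| * |Fbar F y| := abs_mul _ _
    _ ≤ M * 1 := mul_le_mul h1 h2 (abs_nonneg _) ((abs_nonneg _).trans h1)
    _ = M := mul_one M

lemma Bop_continuousAt {F g : ℝ → ℝ} (hF : IsCDF F) (hgc : ContinuousOn g (Set.Ici 0))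
    {M : ℝ} (hM : ∀ u, 0 ≤ u → |g u| ≤ M) {t₀ : ℝ} (ht₀ : 0 < t₀) :
    ContinuousAt (Bop F g) t₀ := by
  have hM0 : 0 ≤ M := (abs_nonneg _).trans (hM 0 le_rfl)
  have hFmeas : Measurable (Fbar F) := Fbar_measurable hF
  set G : ℝ → ℝ → ℝ := fun t y => (Set.Ioc 0 t).indicator (fun y => g (t - y) * Fbar F y) y
    with hGdef
  have hrepr : ∀ t : ℝ, 0 ≤ t → Bop F g t = ∫ y, G t y := by
    intro t ht
    rw [Bop, intervalIntegral.integral_of_le ht,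
      ← MeasureTheory.integral_indicator measurableSet_Ioc]
  have hGmeas : ∀ t : ℝ, AEStronglyMeasurable (G t) volume := by
    intro t
    rw [hGdef]
    apply (aestronglyMeasurable_indicator_iff measurableSet_Ioc).2
    apply AEStronglyMeasurable.mul
    · apply ContinuousOn.aestronglyMeasurable _ measurableSet_Ioc
      apply hgc.comp ((continuous_const.sub continuous_id).continuousOn)
      intro y hy
      simp only [Set.mem_Ici, Pi.sub_apply, id_eq]
      linarith [hy.2]
    · exact hFmeas.aestronglyMeasurable.restrict
  have key : Tendsto (fun t => ∫ y, G t y) (𝓝 t₀) (𝓝 (∫ y, G t₀ y)) := by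
    apply MeasureTheory.tendsto_integral_filter_of_dominated_convergence
      ((Set.Ioc (0:ℝ) (t₀+1)).indicator fun _ => M)
    · exact Filter.Eventually.of_forall hGmeas
    · have hmem : Set.Ioo (0:ℝ) (t₀+1) ∈ 𝓝 t₀ := Ioo_mem_nhds ht₀ (by linarith)
      filter_upwards [hmem] with t ht
      apply MeasureTheory.ae_of_all
      intro y
      by_cases hy : y ∈ Set.Ioc 0 t
      · have h1 : |g (t - y)| ≤ M := hM _ (by linarith [hy.1, hy.2])
        have h2 : |Fbar F y| ≤ 1 := Fbar_abs_le hF y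
        have hy2 : y ∈ Set.Ioc (0:ℝ) (t₀+1) := ⟨hy.1, hy.2.trans (le_of_lt ht.2)⟩
        rw [hGdef]
        simp only [Set.indicator_of_mem hy, Set.indicator_of_mem hy2]
        calc ‖g (t - y) * Fbar F y‖ = |g (t - y)| * |Fbar F y| := abs_mul _ _
        _ ≤ M * 1 := mul_le_mul h1 h2 (abs_nonneg _) ((abs_nonneg _).trans h1)
        _ = M := mul_one M
      · rw [hGdef]
        simp only [Set.indicator_of_notMem hy, norm_zero]
        exact Set.indicator_nonneg (fun _ _ => hM0) y
    · exact (MeasureTheory.integrableOn_const (C := M) measure_Ioc_lt_top.ne).integrable_indicator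
        measurableSet_Ioc
    · have hae : ∀ᵐ y : ℝ, y ≠ t₀ := by
        rw [MeasureTheory.ae_iff]
        simp only [not_not, Set.setOf_eq_eq_singleton]
        exact Real.volume_singleton
      filter_upwards [hae] with y hy
      rcases le_or_gt y 0 with h0 | h0
      · have : ∀ t : ℝ, G t y = 0 := by
          intro t
          rw [hGdef]
          exact Set.indicator_of_notMem (fun hmem => absurd hmem.1 (not_lt.2 h0)) _
        simp only [this]
        exact tendsto_const_nhds
      rcases lt_or_gt_of_ne hy with hlt | hgt
      · -- 0 < y < t₀
        have hev : ∀ᶠ t in 𝓝 t₀, G t y = g (t - y) * Fbar F y := by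
          filter_upwards [lt_mem_nhds hlt] with t ht
          rw [hGdef]; exact Set.indicator_of_mem (Set.mem_Ioc.2 ⟨h0, le_of_lt ht⟩) _
        have hG0 : G t₀ y = g (t₀ - y) * Fbar F y := by
          rw [hGdef]; exact Set.indicator_of_mem (Set.mem_Ioc.2 ⟨h0, le_of_lt hlt⟩) _
        rw [hG0]
        have hc : ContinuousAt (fun t => g (t - y)) t₀ := by
          have h1 : ContinuousAt g (t₀ - y) :=
            hgc.continuousAt (Ici_mem_nhds (by linarith))
          have h2 : ContinuousAt (fun t : ℝ => t - y) t₀ := (continuous_sub_right y).continuousAt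
          exact ContinuousAt.comp (f := fun t : ℝ => t - y) h1 h2
        exact (hc.tendsto.mul tendsto_const_nhds).congr' (hev.mono fun t ht => ht.symm)
      · -- y > t₀
        have hev : ∀ᶠ t in 𝓝 t₀, G t y = 0 := by
          filter_upwards [gt_mem_nhds hgt] with t ht
          rw [hGdef]
          exact Set.indicator_of_notMem (fun hmem => absurd hmem.2 (not_le.2 ht)) _
        have hG0 : G t₀ y = 0 := by
          rw [hGdef]
          exact Set.indicator_of_notMem (fun hmem => absurd hmem.2 (not_le.2 hgt)) _
        rw [hG0]
        exact Tendsto.congr' (hev.mono fun t ht => ht.symm) tendsto_const_nhds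
  have hev : ∀ᶠ t in 𝓝 t₀, Bop F g t = ∫ y, G t y := by
    filter_upwards [lt_mem_nhds ht₀] with t ht using hrepr t (le_of_lt ht)
  unfold ContinuousAt
  rw [hrepr t₀ (le_of_lt ht₀)]
  exact key.congr' (hev.mono fun t ht => ht.symm)

theorem stmt16 (γ α μ : ℝ) (hγ : 1 < γ) (hα : 0 < α) (hμ : 0 < μ)
    (F : ℝ → ℝ) (hF : IsCDF F) (Φ₀ : ℝ) (hΦ₀ : 0 < Φ₀)
    (g : ℝ → ℝ) (hg : IsVolterraSol γ α μ Φ₀ F g)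
    (hbd : ∃ M : ℝ, ∀ u : ℝ, 0 ≤ u → |g u| ≤ M) :
    ∃ h : ℝ → ℝ, LocallyIntegrableOn h (Set.Ioi 0) volume ∧
      (∀ a b : ℝ, 0 < a → a < b → g b - g a = ∫ t in a..b, h t) ∧
      ∀ᵐ u ∂(volume.restrict (Set.Ioi (0:ℝ))),
        u ^ 2 * h u + (γ * u + α) * g u = μ * Φ₀ * Fbar F u + μ * Bop F g u := by
  obtain ⟨hgc, heq⟩ := hg
  obtain ⟨M, hM⟩ := hbd
  have hM0 : 0 ≤ M := (abs_nonneg _).trans (hM 0 le_rfl)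
  set φ : ℝ → ℝ := fun t => t ^ (γ - 2) * Real.exp (-α / t) * (Φ₀ * Fbar F t + Bop F g t)
    with hφdef
  set h : ℝ → ℝ := fun u =>
    (μ * Φ₀ * Fbar F u + μ * Bop F g u - (γ * u + α) * g u) / u ^ 2 with hhdef
  have hBc : ∀ x : ℝ, 0 < x → ContinuousAt (Bop F g) x :=
    fun x hx => Bop_continuousAt hF hgc hM hx
  have hAc : ∀ x : ℝ, 0 < x → ContinuousAt (fun t : ℝ => t ^ (γ - 2) * Real.exp (-α / t)) x := by
    intro x hx
    exact (Real.continuousAt_rpow_const x _ (Or.inl hx.ne')).mul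
      (Real.continuous_exp.continuousAt.comp
        ((continuousAt_const.div continuousAt_id hx.ne')))
  have hφmeas : AEStronglyMeasurable φ (volume.restrict (Set.Ioi 0)) := by
    apply AEStronglyMeasurable.mul
    · exact ContinuousOn.aestronglyMeasurable
        (fun x hx => (hAc x hx).continuousWithinAt) measurableSet_Ioi
    · exact ((Fbar_measurable hF).const_mul Φ₀).aestronglyMeasurable.restrict.add
        (ContinuousOn.aestronglyMeasurable
          (fun x hx => (hBc x hx).continuousWithinAt) measurableSet_Ioi)
  have hgmeas : AEStronglyMeasurable g (volume.restrict (Set.Ioi 0)) :=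
    (hgc.mono Set.Ioi_subset_Ici_self).aestronglyMeasurable measurableSet_Ioi
  have hhmeas : AEStronglyMeasurable h (volume.restrict (Set.Ioi 0)) := by
    have hBm : AEMeasurable (Bop F g) (volume.restrict (Set.Ioi 0)) :=
      ContinuousOn.aemeasurable (fun x hx => (hBc x hx).continuousWithinAt) measurableSet_Ioi
    have hgm : AEMeasurable g (volume.restrict (Set.Ioi 0)) :=
      (hgc.mono Set.Ioi_subset_Ici_self).aemeasurable measurableSet_Ioi
    have hFm : AEMeasurable (Fbar F) (volume.restrict (Set.Ioi 0)) :=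
      (Fbar_measurable hF).aemeasurable
    apply AEMeasurable.aestronglyMeasurable
    rw [hhdef]
    exact (((aemeasurable_const.mul hFm).add (aemeasurable_const.mul hBm)).sub
      ((((measurable_const.mul measurable_id).add measurable_const).aemeasurable).mul hgm)).div
      ((measurable_id.pow_const 2).aemeasurable)
  -- interval integrability of φ from 0
  have hφint0 : ∀ u : ℝ, 0 < u → IntervalIntegrable φ volume 0 u := by
    intro u hu
    rw [intervalIntegrable_iff_integrableOn_Ioc_of_le hu.le]
    have hbnd : IntegrableOn (fun t : ℝ => (Φ₀ + M * u) * t ^ (γ - 2)) (Set.Ioc 0 u) := by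
      have h1 : IntervalIntegrable (fun t : ℝ => t ^ (γ - 2)) volume 0 u :=
        intervalIntegral.intervalIntegrable_rpow' (by linarith)
      exact (intervalIntegrable_iff_integrableOn_Ioc_of_le hu.le).1 (h1.const_mul _)
    apply hbnd.mono' (hφmeas.mono_measure
      (Measure.restrict_mono Set.Ioc_subset_Ioi_self le_rfl))
    rw [MeasureTheory.ae_restrict_iff' measurableSet_Ioc]
    apply MeasureTheory.ae_of_all
    intro t ht
    have ht0 : 0 < t := ht.1
    have hrp : 0 ≤ t ^ (γ - 2) := Real.rpow_nonneg ht0.le _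
    have hS : |Φ₀ * Fbar F t + Bop F g t| ≤ Φ₀ + M * u := by
      calc |Φ₀ * Fbar F t + Bop F g t| ≤ |Φ₀ * Fbar F t| + |Bop F g t| := abs_add_le _ _
      _ ≤ Φ₀ * 1 + M * t := by
          apply add_le_add
          · rw [abs_mul, abs_of_pos hΦ₀]
            exact mul_le_mul_of_nonneg_left (Fbar_abs_le hF t) hΦ₀.le
          · exact Bop_abs_le hF hM ht0.le
      _ ≤ Φ₀ + M * u := by
          have := mul_le_mul_of_nonneg_left ht.2 hM0
          linarith
    have hexp : Real.exp (-α / t) ≤ 1 := by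
      rw [Real.exp_le_one_iff]
      apply div_nonpos_of_nonpos_of_nonneg <;> linarith
    rw [Real.norm_eq_abs, hφdef]
    simp only
    rw [abs_mul, abs_mul, abs_of_nonneg hrp, abs_of_nonneg (Real.exp_pos _).le]
    calc t ^ (γ - 2) * Real.exp (-α / t) * |Φ₀ * Fbar F t + Bop F g t|
        ≤ t ^ (γ - 2) * 1 * (Φ₀ + M * u) := by
          apply mul_le_mul _ hS (abs_nonneg _) (by nlinarith)
          exact mul_le_mul_of_nonneg_left hexp hrp
      _ = (Φ₀ + M * u) * t ^ (γ - 2) := by ring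
  -- interval integrability of h
  have hhint : ∀ a b : ℝ, 0 < a → a ≤ b → IntervalIntegrable h volume a b := by
    intro a b ha hab
    rw [intervalIntegrable_iff_integrableOn_Icc_of_le hab]
    have hIcc : Set.Icc a b ⊆ Set.Ioi (0:ℝ) := fun x hx => lt_of_lt_of_le ha hx.1
    apply MeasureTheory.Integrable.mono'
      (MeasureTheory.integrableOn_const
        measure_Icc_lt_top.ne :
        IntegrableOn (fun _ : ℝ => (μ * Φ₀ + μ * (M * b) + (γ * b + α) * M) / a ^ 2) _ _)
      (hhmeas.mono_measure (Measure.restrict_mono hIcc le_rfl))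
    rw [MeasureTheory.ae_restrict_iff' measurableSet_Icc]
    apply MeasureTheory.ae_of_all
    intro t ht
    have ht0 : 0 < t := lt_of_lt_of_le ha ht.1
    have hN : |μ * Φ₀ * Fbar F t + μ * Bop F g t - (γ * t + α) * g t|
        ≤ μ * Φ₀ + μ * (M * b) + (γ * b + α) * M := by
      have e1 : |μ * Φ₀ * Fbar F t| ≤ μ * Φ₀ := by
        rw [abs_mul, abs_of_pos (mul_pos hμ hΦ₀)]
        nlinarith [Fbar_abs_le hF t, abs_nonneg (Fbar F t), mul_pos hμ hΦ₀]
      have e2 : |μ * Bop F g t| ≤ μ * (M * b) := by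
        rw [abs_mul, abs_of_pos hμ]
        apply mul_le_mul_of_nonneg_left _ hμ.le
        calc |Bop F g t| ≤ M * t := Bop_abs_le hF hM ht0.le
        _ ≤ M * b := mul_le_mul_of_nonneg_left ht.2 hM0
      have e3 : |(γ * t + α) * g t| ≤ (γ * b + α) * M := by
        rw [abs_mul]
        apply mul_le_mul _ (hM t ht0.le) (abs_nonneg _) (by nlinarith)
        rw [abs_of_pos (by nlinarith)]
        nlinarith [ht.2]
      calc |μ * Φ₀ * Fbar F t + μ * Bop F g t - (γ * t + α) * g t|
          ≤ |μ * Φ₀ * Fbar F t + μ * Bop F g t| + |(γ * t + α) * g t| := abs_sub _ _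
        _ ≤ |μ * Φ₀ * Fbar F t| + |μ * Bop F g t| + |(γ * t + α) * g t| := by
            linarith [abs_add_le (μ * Φ₀ * Fbar F t) (μ * Bop F g t)]
        _ ≤ _ := by linarith
    rw [Real.norm_eq_abs, hhdef]
    simp only
    rw [abs_div, abs_of_nonneg (by positivity : (0:ℝ) ≤ t ^ 2)]
    have hb0 : 0 < b := lt_of_lt_of_le ha hab
    have hC0 : 0 ≤ μ * Φ₀ + μ * (M * b) + (γ * b + α) * M := by
      nlinarith [mul_pos hμ hΦ₀, mul_nonneg hμ.le (mul_nonneg hM0 hb0.le),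
        mul_nonneg (by nlinarith : (0:ℝ) ≤ γ * b + α) hM0]
    apply div_le_div₀ hC0 hN (by positivity)
    nlinarith [ht.1]
  -- the key decomposition and derivative
  have hgW : ∀ a : ℝ, 0 < a → ∀ u : ℝ, 0 < u →
      g u = μ * u ^ (-γ) * Real.exp (α / u) *
        ((∫ t in (0:ℝ)..a, φ t) + ∫ t in a..u, φ t) := by
    intro a ha u hu
    rw [heq u hu, intervalIntegral.integral_add_adjacent_intervals (hφint0 a ha)
      ((hφint0 a ha).symm.trans (hφint0 u hu))]
  have hderiv : ∀ a : ℝ, 0 < a → ∀ x : ℝ, 0 < x →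
      HasDerivWithinAt g (h x) (Set.Ioi x) x := by
    intro a ha x hx0
    set c : ℝ := ∫ t in (0:ℝ)..a, φ t with hc
    -- derivative of the primitive
    have hK : HasDerivWithinAt (fun u => ∫ t in a..u, φ t) (φ x) (Set.Ioi x) x := by
      have hint : IntervalIntegrable φ volume a x := (hφint0 a ha).symm.trans (hφint0 x hx0)
      have hmeas : StronglyMeasurableAtFilter φ (𝓝[Set.Ici x] x) :=
        ⟨Set.Ioi 0, nhdsWithin_le_nhds (Ioi_mem_nhds hx0), hφmeas⟩
      have hcφ : ContinuousWithinAt φ (Set.Ici x) x := by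
        apply ContinuousWithinAt.mul
        · exact (hAc x hx0).continuousWithinAt
        · exact (continuousWithinAt_const.mul
            (continuousWithinAt_const.sub (hF.2.1 x))).add
            (hBc x hx0).continuousWithinAt
      have hmeas' : StronglyMeasurableAtFilter φ (𝓝[Set.Ioi x] x) :=
        ⟨Set.Ioi 0, nhdsWithin_le_nhds (Ioi_mem_nhds hx0), hφmeas⟩
      exact (intervalIntegral.integral_hasDerivWithinAt_right (s := Set.Ici x)
        (t := Set.Ioi x) hint hmeas' (hcφ.mono Set.Ioi_subset_Ici_self)).mono
        Set.Ioi_subset_Ici_self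
    -- derivative of the prefactor
    have hp : HasDerivAt (fun u : ℝ => μ * u ^ (-γ) * Real.exp (α / u))
        (μ * (-γ * x ^ (-γ - 1)) * Real.exp (α / x)
          + μ * x ^ (-γ) * (Real.exp (α / x) * (α * -(x ^ 2)⁻¹))) x := by
      have h2 : HasDerivAt (fun u : ℝ => α / u) (α * -(x ^ 2)⁻¹) x := by
        simpa [div_eq_mul_inv] using HasDerivAt.const_mul α (hasDerivAt_inv hx0.ne')
      have h3 := h2.exp
      have h1 : HasDerivAt (fun u : ℝ => u ^ (-γ)) (-γ * x ^ (-γ - 1)) x := by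
        simpa using Real.hasDerivAt_rpow_const (p := -γ) (Or.inl hx0.ne')
      exact (HasDerivAt.const_mul μ h1).mul h3
    have hW : HasDerivWithinAt
        (fun u => μ * u ^ (-γ) * Real.exp (α / u) * (c + ∫ t in a..u, φ t))
        ((μ * (-γ * x ^ (-γ - 1)) * Real.exp (α / x)
          + μ * x ^ (-γ) * (Real.exp (α / x) * (α * -(x ^ 2)⁻¹)))
          * (c + ∫ t in a..x, φ t)
          + μ * x ^ (-γ) * Real.exp (α / x) * φ x) (Set.Ioi x) x := by
      exact hp.hasDerivWithinAt.mul (hK.const_add c)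
    have hgx : g x = μ * x ^ (-γ) * Real.exp (α / x) * (c + ∫ t in a..x, φ t) :=
      hgW a ha x hx0
    have hgD : HasDerivWithinAt g
        ((μ * (-γ * x ^ (-γ - 1)) * Real.exp (α / x)
          + μ * x ^ (-γ) * (Real.exp (α / x) * (α * -(x ^ 2)⁻¹)))
          * (c + ∫ t in a..x, φ t)
          + μ * x ^ (-γ) * Real.exp (α / x) * φ x) (Set.Ioi x) x := by
      apply hW.congr_of_eventuallyEq _ hgx
      filter_upwards [nhdsWithin_le_nhds (Ioi_mem_nhds hx0)] with u hu
      exact hgW a ha u hu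
    -- identify the derivative with h x
    have halg :
        (μ * (-γ * x ^ (-γ - 1)) * Real.exp (α / x)
          + μ * x ^ (-γ) * (Real.exp (α / x) * (α * -(x ^ 2)⁻¹)))
          * (c + ∫ t in a..x, φ t)
          + μ * x ^ (-γ) * Real.exp (α / x) * φ x = h x := by
      have hxne : x ≠ 0 := hx0.ne'
      have r1 : x ^ (-γ - 1) = x ^ (-γ) * x⁻¹ := by
        rw [show -γ - 1 = -γ + (-1) by ring, Real.rpow_add hx0, Real.rpow_neg_one]
      have r2 : x ^ (-γ) * x ^ (γ - 2) = (x ^ 2)⁻¹ := by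
        rw [← Real.rpow_add hx0, show -γ + (γ - 2) = -2 by ring,
          show (-2:ℝ) = -(2:ℝ) by norm_num, Real.rpow_neg hx0.le, Real.rpow_two]
      have r3 : Real.exp (α / x) * Real.exp (-α / x) = 1 := by
        rw [← Real.exp_add, neg_div, add_neg_cancel, Real.exp_zero]
      have hPφ : μ * x ^ (-γ) * Real.exp (α / x) * φ x
          = μ * (x ^ 2)⁻¹ * (Φ₀ * Fbar F x + Bop F g x) := by
        rw [hφdef]
        simp only
        calc μ * x ^ (-γ) * Real.exp (α / x) *
              (x ^ (γ - 2) * Real.exp (-α / x) * (Φ₀ * Fbar F x + Bop F g x))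
            = μ * (x ^ (-γ) * x ^ (γ - 2)) * (Real.exp (α / x) * Real.exp (-α / x))
              * (Φ₀ * Fbar F x + Bop F g x) := by ring
          _ = μ * (x ^ 2)⁻¹ * 1 * (Φ₀ * Fbar F x + Bop F g x) := by rw [r2, r3]
          _ = μ * (x ^ 2)⁻¹ * (Φ₀ * Fbar F x + Bop F g x) := by ring
      have hP' : (μ * (-γ * x ^ (-γ - 1)) * Real.exp (α / x)
          + μ * x ^ (-γ) * (Real.exp (α / x) * (α * -(x ^ 2)⁻¹)))
          * (c + ∫ t in a..x, φ t)
          = (-γ * x⁻¹ - α * (x ^ 2)⁻¹) * g x := by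
        rw [hgx, r1]; ring
      rw [hP', hPφ, hhdef]
      simp only
      have hx2 : (x:ℝ) ^ 2 ≠ 0 := pow_ne_zero 2 hxne
      field_simp
      ring
    rw [← halg]
    exact hgD
  refine ⟨h, ?_, ?_, ?_⟩
  · rw [MeasureTheory.locallyIntegrableOn_iff isOpen_Ioi.isLocallyClosed]
    intro k hk hkc
    rcases k.eq_empty_or_nonempty with rfl | hne
    · exact integrableOn_empty
    · have ha : sInf k ∈ k := hkc.sInf_mem hne
      have hb : sSup k ∈ k := hkc.sSup_mem hne
      have h1 : 0 < sInf k := hk ha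
      have h2 : sInf k ≤ sSup k := csInf_le_csSup hne hkc.bddBelow hkc.bddAbove
      have h3 := hhint _ _ h1 h2
      rw [intervalIntegrable_iff_integrableOn_Icc_of_le h2] at h3
      exact h3.mono_set (fun x hx =>
        ⟨csInf_le hkc.bddBelow hx, le_csSup hkc.bddAbove hx⟩)
  · intro a b ha hab
    have hcont : ContinuousOn g (Set.Icc a b) :=
      hgc.mono (fun x hx => le_trans ha.le hx.1)
    have key := intervalIntegral.integral_eq_sub_of_hasDeriv_right_of_le hab.le hcont
      (fun x hx => hderiv a ha x (ha.trans hx.1)) (hhint a b ha hab.le)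
    exact key.symm
  · filter_upwards [MeasureTheory.ae_restrict_mem measurableSet_Ioi] with u hu
    have hu0 : (0:ℝ) < u := hu
    rw [hhdef]
    simp only
    field_simp
    ring
end

section
/- C¹-smoothness under continuity of F: suppose in addition that the distribution function F is continuous on ℝ, and let g be a continuous bounded solution of the Volterra equation (★) on [0, ∞). Then g is continuously differentiable on (0, ∞), and for every u > 0 the first-order integro-differential equation u² g′(u) + (γ u + α) g(u) = μ Φ₀ F̄(u) + μ (Bg)(u) holds. -/
open MeasureTheory Filter Set Topology

theorem stmt17 (γ α μ : ℝ) (hγ : 1 < γ) (hα : 0 < α) (hμ : 0 < μ)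
    (F : ℝ → ℝ) (hF : IsCDF F) (hFc : Continuous F) (Φ₀ : ℝ) (hΦ₀ : 0 < Φ₀)
    (g : ℝ → ℝ) (hg : IsVolterraSol γ α μ Φ₀ F g)
    (hbd : ∃ M : ℝ, ∀ u : ℝ, 0 ≤ u → |g u| ≤ M) :
    ∃ g' : ℝ → ℝ, ContinuousOn g' (Set.Ioi 0) ∧
      ∀ u : ℝ, 0 < u → HasDerivAt g (g' u) u ∧
        u ^ 2 * g' u + (γ * u + α) * g u = μ * Φ₀ * Fbar F u + μ * Bop F g u := by
  obtain ⟨hgc, hsol⟩ := hg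
  have hFbar : Continuous (Fbar F) := continuous_const.sub hFc
  -- continuous extension of g
  set G : ℝ → ℝ := fun t => g (max t 0) with hGdef
  have hGcont : Continuous G :=
    hgc.comp_continuous (continuous_id.max continuous_const) fun t => Set.mem_Ici.mpr (le_max_right _ _)
  have hGg : ∀ t : ℝ, 0 ≤ t → G t = g t := by
    intro t ht; simp only [hGdef]; rw [max_eq_left ht]
  -- continuous version of Bop
  set B' : ℝ → ℝ := fun t => ∫ y in (0:ℝ)..t, G (t - y) * Fbar F y with hB'def
  have hB'cont : Continuous B' := by
    exact intervalIntegral.continuous_parametric_intervalIntegral_of_continuous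
      (f := fun t y => G (t - y) * Fbar F y) (μ := volume)
      ((hGcont.comp (continuous_fst.sub continuous_snd)).mul (hFbar.comp continuous_snd))
      continuous_id
  have hBB : ∀ t : ℝ, 0 ≤ t → Bop F g t = B' t := by
    intro t ht
    apply intervalIntegral.integral_congr
    intro y hy
    rw [uIcc_of_le ht] at hy
    show g (t - y) * Fbar F y = G (t - y) * Fbar F y
    rw [hGg (t - y) (by linarith [hy.2])]
  -- the "source" Ψ
  set Ψ : ℝ → ℝ := fun t => Φ₀ * Fbar F t + B' t with hΨdef
  have hΨcont : Continuous Ψ := (continuous_const.mul hFbar).add hB'cont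
  -- the integrand
  set h : ℝ → ℝ := fun t => t ^ (γ - 2) * Real.exp (-α / t) * Ψ t with hhdef
  have hhcont : ContinuousOn h (Ioi 0) := by
    intro t ht
    have ht0 : (0:ℝ) < t := ht
    have h1 : ContinuousAt (fun s : ℝ => s ^ (γ - 2)) t :=
      Real.continuousAt_rpow_const t (γ - 2) (Or.inl ht0.ne')
    have h2 : ContinuousAt (fun s : ℝ => Real.exp (-α / s)) t :=
      Real.continuous_exp.continuousAt.comp (continuousAt_const.div continuousAt_id ht0.ne')
    exact (((h1.mul h2).mul hΨcont.continuousAt)).continuousWithinAt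
  -- limit of the kernel at 0⁺
  have hk0 : Tendsto (fun t : ℝ => t ^ (γ - 2) * Real.exp (-α / t)) (𝓝[>] (0:ℝ)) (𝓝 0) := by
    have hT := (tendsto_rpow_mul_exp_neg_mul_atTop_nhds_zero (2 - γ) α hα).comp
      tendsto_inv_nhdsGT_zero
    apply hT.congr'
    filter_upwards [self_mem_nhdsWithin] with t ht
    have ht0 : (0:ℝ) < t := ht
    simp only [Function.comp]
    rw [Real.inv_rpow ht0.le, ← Real.rpow_neg ht0.le, neg_sub, ← div_eq_mul_inv]
  -- bound on (0, u]
  have hkb : ∀ u : ℝ, 0 < u → ∃ C : ℝ, ∀ t ∈ Ioc (0:ℝ) u, ‖h t‖ ≤ C := by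
    intro u hu
    rw [Metric.tendsto_nhdsWithin_nhds] at hk0
    obtain ⟨δ, hδ, hδ'⟩ := hk0 1 one_pos
    have hkc : ContinuousOn (fun t : ℝ => t ^ (γ - 2) * Real.exp (-α / t)) (Icc (min δ u) u) := by
      intro t ht
      have ht0 : (0:ℝ) < t := lt_of_lt_of_le (lt_min hδ hu) ht.1
      have h1 : ContinuousAt (fun s : ℝ => s ^ (γ - 2)) t :=
        Real.continuousAt_rpow_const t (γ - 2) (Or.inl ht0.ne')
      have h2 : ContinuousAt (fun s : ℝ => Real.exp (-α / s)) t :=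
        Real.continuous_exp.continuousAt.comp (continuousAt_const.div continuousAt_id ht0.ne')
      exact (h1.mul h2).continuousWithinAt
    obtain ⟨C₁, hC₁⟩ := isCompact_Icc.exists_bound_of_continuousOn hkc
    obtain ⟨C₂, hC₂⟩ := isCompact_Icc.exists_bound_of_continuousOn
      (hΨcont.continuousOn : ContinuousOn Ψ (Icc 0 u))
    have hC₂0 : 0 ≤ C₂ := le_trans (norm_nonneg _) (hC₂ 0 ⟨le_refl _, hu.le⟩)
    refine ⟨max 1 C₁ * C₂, fun t ht => ?_⟩
    have hkt : ‖t ^ (γ - 2) * Real.exp (-α / t)‖ ≤ max 1 C₁ := by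
      rcases lt_or_ge t δ with hlt | hle
      · have := hδ' (x := t) ht.1 (by rw [Real.dist_eq, sub_zero, abs_of_pos ht.1]; exact hlt)
        rw [Real.dist_eq, sub_zero] at this
        exact le_trans this.le (le_max_left _ _)
      · exact le_trans (hC₁ t ⟨le_trans (min_le_left _ _) hle, ht.2⟩) (le_max_right _ _)
    have hΨt : ‖Ψ t‖ ≤ C₂ := hC₂ t ⟨ht.1.le, ht.2⟩
    calc ‖h t‖ = ‖t ^ (γ - 2) * Real.exp (-α / t)‖ * ‖Ψ t‖ := by
          simp only [hhdef]; rw [norm_mul]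
      _ ≤ max 1 C₁ * C₂ := by
          apply mul_le_mul hkt hΨt (norm_nonneg _)
          exact le_trans (norm_nonneg _) hkt
  -- integrability
  have hint : ∀ u : ℝ, 0 < u → IntervalIntegrable h volume 0 u := by
    intro u hu
    rw [intervalIntegrable_iff_integrableOn_Ioc_of_le hu.le]
    obtain ⟨C, hC⟩ := hkb u hu
    refine ⟨(hhcont.mono fun t ht => ht.1).aestronglyMeasurable measurableSet_Ioc, ?_⟩
    exact HasFiniteIntegral.restrict_of_bounded (C := C) measure_Ioc_lt_top
      (ae_restrict_of_forall_mem measurableSet_Ioc fun t ht => hC t ht)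
  -- the primitive
  set H : ℝ → ℝ := fun u => ∫ t in (0:ℝ)..u, h t with hHdef
  have hgH : ∀ u : ℝ, 0 < u → g u = μ * u ^ (-γ) * Real.exp (α / u) * H u := by
    intro u hu
    rw [hsol u hu]
    congr 1
    apply intervalIntegral.integral_congr
    intro t ht
    rw [uIcc_of_le hu.le] at ht
    simp only [hhdef, hΨdef]
    rw [hBB t ht.1]
  have hHderiv : ∀ u : ℝ, 0 < u → HasDerivAt H (h u) u := by
    intro u hu
    exact intervalIntegral.integral_hasDerivAt_right (hint u hu)
      (hhcont.stronglyMeasurableAtFilter isOpen_Ioi u hu)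
      (hhcont.continuousAt (Ioi_mem_nhds hu))
  -- derivative of the prefactor
  have hA : ∀ u : ℝ, 0 < u →
      HasDerivAt (fun v : ℝ => μ * v ^ (-γ) * Real.exp (α / v))
        (μ * (-γ * u ^ (-γ - 1)) * Real.exp (α / u) +
          μ * u ^ (-γ) * (Real.exp (α / u) * -(α / u ^ 2))) u := by
    intro u hu
    have h1 : HasDerivAt (fun v : ℝ => μ * v ^ (-γ)) (μ * (-γ * u ^ (-γ - 1))) u :=
      (Real.hasDerivAt_rpow_const (Or.inl hu.ne')).const_mul μ
    have h2 : HasDerivAt (fun v : ℝ => α / v) (-(α / u ^ 2)) u := by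
      simpa [div_eq_mul_inv, mul_neg] using (hasDerivAt_inv hu.ne').const_mul α
    exact h1.mul h2.exp
  -- the candidate derivative
  set g' : ℝ → ℝ := fun u => (μ * Ψ u - (γ * u + α) * g u) / u ^ 2 with hg'def
  have hg'cont : ContinuousOn g' (Ioi 0) := by
    apply ContinuousOn.div
    · exact (continuous_const.mul hΨcont).continuousOn.sub
        (((continuous_const.mul continuous_id).add continuous_const).continuousOn.mul
          (hgc.mono fun x hx => Set.mem_Ici.mpr (le_of_lt hx)))
    · exact (continuous_pow 2).continuousOn
    · intro x hx; exact pow_ne_zero 2 (ne_of_gt hx)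
  refine ⟨g', hg'cont, fun u hu => ?_⟩
  have hu0 : u ≠ 0 := hu.ne'
  have hP : u ^ (-γ) ≠ 0 := (Real.rpow_pos_of_pos hu _).ne'
  have hQ : Real.exp (α / u) ≠ 0 := Real.exp_ne_zero _
  have r1 : u ^ (-γ - 1) = u ^ (-γ) / u := by
    rw [Real.rpow_sub hu, Real.rpow_one]
  have r2 : u ^ (γ - 2) = 1 / (u ^ 2 * u ^ (-γ)) := by
    have e2 : u ^ (-γ) * u ^ (γ - 2) = (u ^ 2)⁻¹ := by
      rw [← Real.rpow_add hu, show -γ + (γ - 2) = -2 by ring,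
        show (-2:ℝ) = -((2:ℕ):ℝ) by norm_num, Real.rpow_neg hu.le, Real.rpow_natCast]
    have e2' : u ^ (-γ) * u ^ (γ - 2) * u ^ 2 = 1 := by
      rw [e2]; field_simp
    rw [eq_div_iff (by positivity : u ^ 2 * u ^ (-γ) ≠ 0)]
    linear_combination e2'
  have r3 : Real.exp (-α / u) = (Real.exp (α / u))⁻¹ := by
    rw [← Real.exp_neg, neg_div]
  have hAH := (hA u hu).mul (hHderiv u hu)
  have hgloc : g =ᶠ[𝓝 u] fun v => μ * v ^ (-γ) * Real.exp (α / v) * H v := by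
    filter_upwards [Ioi_mem_nhds hu] with v hv
    exact hgH v hv
  have hgd := hAH.congr_of_eventuallyEq hgloc
  have key : (μ * (-γ * u ^ (-γ - 1)) * Real.exp (α / u) +
      μ * u ^ (-γ) * (Real.exp (α / u) * -(α / u ^ 2))) * H u +
      μ * u ^ (-γ) * Real.exp (α / u) * h u = g' u := by
    simp only [hg'def, hhdef]
    rw [hgH u hu, r1, r2, r3]
    field_simp
    ring
  constructor
  · rw [← key]; exact hgd
  · rw [hBB u hu.le]
    simp only [hg'def, hΨdef]
    field_simp
    ring
end

section
/- Integration by parts for the jump term: let ν be a Borel probability measure on ℝ concentrated on (0, ∞), with distribution function F(x) := ν((−∞, x]) and tail F̄ := 1 − F. Let Φ₀ ∈ ℝ, let g : [0, ∞) → ℝ be continuous, and define Φ : ℝ → ℝ by Φ(x) := 0 for x < 0 and Φ(x) := Φ₀ + ∫₀ˣ g(y) dy for x ≥ 0. Then for every u > 0, ∫_{(0,∞)} (Φ(u) − Φ(u−y)) dν(y) = Φ₀ F̄(u) + ∫₀ᵘ g(y) F̄(u−y) dy, provided ν({u}) = 0 (in particular, for every u > 0 whenever F is continuous). -/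
open MeasureTheory Filter Set Topology

theorem stmt18 (ν : Measure ℝ) [IsProbabilityMeasure ν] (hν : ν (Set.Ioi 0) = 1)
    (F : ℝ → ℝ) (hF : ∀ x : ℝ, F x = (ν (Set.Iic x)).toReal)
    (Φ₀ : ℝ) (g : ℝ → ℝ) (hg : ContinuousOn g (Set.Ici 0))
    (Φ : ℝ → ℝ) (hΦneg : ∀ x : ℝ, x < 0 → Φ x = 0)
    (hΦpos : ∀ x : ℝ, 0 ≤ x → Φ x = Φ₀ + ∫ y in (0:ℝ)..x, g y)
    (u : ℝ) (hu : 0 < u) (hatom : ν {u} = 0) :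
    ∫ y in Set.Ioi (0:ℝ), (Φ u - Φ (u - y)) ∂ν =
      Φ₀ * Fbar F u + ∫ y in (0:ℝ)..u, g y * Fbar F (u - y) := by
  -- A globally continuous function that agrees with `g` on `[0, ∞)`.
  set G : ℝ → ℝ := fun x => g (max x 0) with hGdef
  have hGc : Continuous G :=
    hg.comp_continuous (continuous_id.max continuous_const) fun x => le_max_right x 0
  have hGg : ∀ x : ℝ, 0 ≤ x → G x = g x := fun x hx => by
    simp only [hGdef, max_eq_left hx]
  -- interval integrals of `g` on `[0,x]` equal those of `G`
  have hintG : ∀ x : ℝ, 0 ≤ x → (∫ y in (0:ℝ)..x, g y) = ∫ y in (0:ℝ)..x, G y := by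
    intro x hx
    apply intervalIntegral.integral_congr
    intro t ht
    rw [uIcc_of_le hx] at ht
    exact (hGg t ht.1).symm
  have hΦG : ∀ x : ℝ, 0 ≤ x → Φ x = Φ₀ + ∫ y in (0:ℝ)..x, G y := fun x hx => by
    rw [hΦpos x hx, hintG x hx]
  -- basic facts about `F`
  have hν1 : ν univ = 1 := measure_univ
  have hIicfin : ∀ x : ℝ, ν (Iic x) ≠ ⊤ := fun x => (measure_lt_top ν _).ne
  have hFmono : Monotone F := fun a b hab => by
    rw [hF a, hF b]
    exact ENNReal.toReal_mono (hIicfin b) (measure_mono (Iic_subset_Iic.2 hab))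
  have hFmeas : Measurable F := hFmono.measurable
  have hFnonneg : ∀ t : ℝ, 0 ≤ F t := fun t => by rw [hF]; exact ENNReal.toReal_nonneg
  have hFle1 : ∀ t : ℝ, F t ≤ 1 := fun t => by
    rw [hF]
    have h1 : ν (Iic t) ≤ 1 := prob_le_one
    simpa using ENNReal.toReal_mono ENNReal.one_ne_top h1
  have hFbar : ∀ x : ℝ, (ν (Ioi x)).toReal = Fbar F x := by
    intro x
    have h1 : ν (Ioi x) = ν univ - ν (Iic x) := by
      rw [← compl_Iic]
      exact measure_compl measurableSet_Iic (hIicfin x)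
    rw [h1, ENNReal.toReal_sub_of_le (measure_mono (subset_univ _)) (by simp [hν1]), hν1]
    simp [Fbar, hF]
  have hIio : ν (Iio u) = ν (Iic u) := by
    have h1 : Iic u = Iio u ∪ {u} := (Iio_union_right).symm
    rw [h1, measure_union (by simp) (measurableSet_singleton u), hatom, add_zero]
  have hIoo : ∀ x : ℝ, x ∈ Ioc (0:ℝ) u → (ν (Ioo (u - x) u)).toReal = F u - F (u - x) := by
    intro x hx
    have hdiff : Ioo (u - x) u = Iio u \ Iic (u - x) := by
      ext t
      simp only [mem_Ioo, mem_diff, mem_Iio, mem_Iic, not_le]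
      tauto
    have hsub : Iic (u - x) ⊆ Iio u := by
      intro t ht
      simp only [mem_Iic] at ht
      simp only [mem_Iio]
      have := hx.1
      linarith
    rw [hdiff, measure_diff hsub (measurableSet_Iic.nullMeasurableSet) (hIicfin _),
      ENNReal.toReal_sub_of_le (measure_mono hsub) ((measure_lt_top ν _).ne), hIio,
      hF, hF]
  -- `Φ u` value
  have hΦu : Φ u = Φ₀ + ∫ y in (0:ℝ)..u, G y := hΦG u hu.le
  -- integrability of the integrand over `Ioc 0 u` and over `Ioi u`
  have hGiv : ∀ a b : ℝ, IntervalIntegrable G volume a b := fun a b =>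
    hGc.intervalIntegrable a b
  have hprim : Continuous fun x : ℝ => ∫ t in (0:ℝ)..x, G t :=
    intervalIntegral.continuous_primitive hGiv 0
  have hψc : Continuous fun y : ℝ => Φ u - (Φ₀ + ∫ t in (0:ℝ)..(u - y), G t) :=
    continuous_const.sub (continuous_const.add (hprim.comp (continuous_const.sub continuous_id)))
  have hInt1 : IntegrableOn (fun y : ℝ => Φ u - Φ (u - y)) (Ioc 0 u) ν := by
    refine ((hψc.integrableOn_Ioc)).congr_fun ?_ measurableSet_Ioc
    intro y hy
    simp only [hΦG (u - y) (by linarith [hy.2] : (0:ℝ) ≤ u - y)]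
  have hInt2 : IntegrableOn (fun y : ℝ => Φ u - Φ (u - y)) (Ioi u) ν := by
    refine ((integrableOn_const (C := Φ u) (measure_lt_top ν _).ne)).congr_fun ?_ measurableSet_Ioi
    intro y hy
    simp only [hΦneg (u - y) (by simp only [mem_Ioi] at hy; linarith), sub_zero]
  -- split the integral at `u`
  have hsplit : ∫ y in Ioi (0:ℝ), (Φ u - Φ (u - y)) ∂ν =
      (∫ y in Ioc (0:ℝ) u, (Φ u - Φ (u - y)) ∂ν) + ∫ y in Ioi u, (Φ u - Φ (u - y)) ∂ν := by
    rw [← Ioc_union_Ioi_eq_Ioi hu.le]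
    exact setIntegral_union (fun s hs ht => by
        exact fun x hx => absurd ((hs hx).2) (not_le.2 (ht hx))) measurableSet_Ioi hInt1 hInt2
  -- the integral over `Ioi u`
  have hIoiInt : ∫ y in Ioi u, (Φ u - Φ (u - y)) ∂ν = Φ u * Fbar F u := by
    rw [setIntegral_congr_fun measurableSet_Ioi (g := fun _ => Φ u)
      (fun y hy => by
        simp only [mem_Ioi] at hy
        rw [hΦneg (u - y) (by linarith), sub_zero]),
      setIntegral_const, smul_eq_mul, measureReal_def, hFbar, mul_comm]
  -- replace `Ioc 0 u` by `Ioo 0 u`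
  have haes : (Ioc (0:ℝ) u : Set ℝ) =ᵐ[ν] Ioo 0 u := by
    rw [ae_eq_set]
    constructor
    · rw [show Ioc (0:ℝ) u \ Ioo 0 u = {u} from by
        ext t; simp only [mem_diff, mem_Ioc, mem_Ioo, mem_singleton_iff, not_and, not_lt]
        constructor
        · rintro ⟨⟨h1, h2⟩, h3⟩; exact le_antisymm h2 (h3 h1)
        · rintro rfl; exact ⟨⟨hu, le_rfl⟩, fun _ => le_rfl⟩]; exact hatom
    · rw [diff_eq_empty.2 Ioo_subset_Ioc_self]; exact measure_empty
  have hIocIoo : ∫ y in Ioc (0:ℝ) u, (Φ u - Φ (u - y)) ∂ν =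
      ∫ y in Ioo (0:ℝ) u, (Φ u - Φ (u - y)) ∂ν := setIntegral_congr_set haes
  -- Fubini for the kernel
  set f : ℝ → ℝ → ℝ := fun y x => if u - y < x then G x else 0 with hfdef
  have hSopen : IsOpen {p : ℝ × ℝ | u - p.1 < p.2} :=
    isOpen_lt (continuous_const.sub continuous_fst) continuous_snd
  haveI hfinvol : IsFiniteMeasure (volume.restrict (Ioc (0:ℝ) u)) :=
    ⟨by rw [Measure.restrict_apply_univ]; simp [Real.volume_Ioc]⟩
  obtain ⟨C, hC⟩ := (isCompact_Icc (a := (0:ℝ)) (b := u)).exists_bound_of_continuousOn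
    hGc.continuousOn
  have hKint : Integrable (Function.uncurry f)
      ((ν.restrict (Ioo 0 u)).prod (volume.restrict (Ioc 0 u))) := by
    have hmeas : StronglyMeasurable (Function.uncurry f) := by
      have : Function.uncurry f =
          Set.indicator {p : ℝ × ℝ | u - p.1 < p.2} (fun p => G p.2) := by
        ext p
        simp [Function.uncurry, hfdef, Set.indicator_apply]
      rw [this]
      exact (hGc.comp continuous_snd).stronglyMeasurable.indicator hSopen.measurableSet
    refine Integrable.mono' (integrable_const (max C 0)) hmeas.aestronglyMeasurable ?_
    have hmem : ∀ᵐ p ∂((ν.restrict (Ioo (0:ℝ) u)).prod (volume.restrict (Ioc (0:ℝ) u))),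
        p ∈ (Ioo (0:ℝ) u) ×ˢ (Ioc (0:ℝ) u) := by
      rw [Measure.prod_restrict]
      exact ae_restrict_mem (measurableSet_Ioo.prod measurableSet_Ioc)
    filter_upwards [hmem] with p hp
    simp only [Function.uncurry, hfdef]
    split_ifs
    · exact le_trans (hC p.2 (Ioc_subset_Icc_self hp.2)) (le_max_left _ _)
    · simp [le_max_right]
  have hswap :
      (∫ y in Ioo (0:ℝ) u, ∫ x in Ioc (0:ℝ) u, f y x ∂volume ∂ν) =
        ∫ x in Ioc (0:ℝ) u, ∫ y in Ioo (0:ℝ) u, f y x ∂ν ∂volume :=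
    integral_integral_swap hKint
  -- inner integral in `x`
  have hinner₁ : ∀ y ∈ Ioo (0:ℝ) u,
      (∫ x in Ioc (0:ℝ) u, f y x ∂volume) = Φ u - Φ (u - y) := by
    intro y hy
    have h0y : (0:ℝ) ≤ u - y := by linarith [hy.2]
    have hyu : u - y ≤ u := by linarith [hy.1]
    have hind : (fun x => f y x) = Set.indicator (Ioi (u - y)) G := by
      ext x
      simp [hfdef, Set.indicator_apply, mem_Ioi]
    rw [hind, integral_indicator measurableSet_Ioi,
      Measure.restrict_restrict measurableSet_Ioi]
    have hseq : Ioi (u - y) ∩ Ioc (0:ℝ) u = Ioc (u - y) u := by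
      ext t
      simp only [mem_inter_iff, mem_Ioi, mem_Ioc]
      constructor
      · rintro ⟨h1, _, h3⟩; exact ⟨h1, h3⟩
      · rintro ⟨h1, h2⟩; exact ⟨h1, lt_of_le_of_lt h0y h1, h2⟩
    rw [hseq, ← intervalIntegral.integral_of_le hyu,
      hΦG u hu.le, hΦG (u - y) h0y]
    have := intervalIntegral.integral_interval_sub_left (hGiv 0 u) (hGiv 0 (u - y))
    rw [← this]
    ring
  -- inner integral in `y`
  have hinner₂ : ∀ x ∈ Ioc (0:ℝ) u,
      (∫ y in Ioo (0:ℝ) u, f y x ∂ν) = G x * (F u - F (u - x)) := by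
    intro x hx
    have h0x : (0:ℝ) ≤ u - x := by linarith [hx.2]
    have hind : (fun y => f y x) = Set.indicator (Ioi (u - x)) (fun _ => G x) := by
      ext y
      simp only [hfdef, Set.indicator_apply, mem_Ioi]
      congr 1
      simp only [eq_iff_iff]
      constructor <;> intro h <;> linarith
    rw [hind, integral_indicator measurableSet_Ioi,
      Measure.restrict_restrict measurableSet_Ioi]
    have hseq : Ioi (u - x) ∩ Ioo (0:ℝ) u = Ioo (u - x) u := by
      ext t
      simp only [mem_inter_iff, mem_Ioi, mem_Ioo]
      constructor
      · rintro ⟨h1, _, h3⟩; exact ⟨h1, h3⟩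
      · rintro ⟨h1, h2⟩; exact ⟨h1, lt_of_le_of_lt h0x h1, h2⟩
    rw [hseq, setIntegral_const, smul_eq_mul, measureReal_def, hIoo x hx, mul_comm]
  -- put both inner computations together
  have hmain : ∫ y in Ioo (0:ℝ) u, (Φ u - Φ (u - y)) ∂ν =
      ∫ x in Ioc (0:ℝ) u, G x * (F u - F (u - x)) ∂volume := by
    rw [← setIntegral_congr_fun measurableSet_Ioo hinner₁, hswap]
    exact setIntegral_congr_fun measurableSet_Ioc hinner₂
  -- rewrite the right-hand side
  have hGiOn : IntegrableOn G (Ioc 0 u) volume := hGc.integrableOn_Ioc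
  have hmeasV : AEStronglyMeasurable (fun x : ℝ => F u - F (u - x))
      (volume.restrict (Ioc (0:ℝ) u)) :=
    ((measurable_const.sub (hFmeas.comp (measurable_const.sub measurable_id))).stronglyMeasurable).aestronglyMeasurable
  have hI1 : IntegrableOn (fun x : ℝ => G x * (F u - F (u - x))) (Ioc 0 u) volume := by
    have := Integrable.bdd_mul (c := 1) hGiOn hmeasV
      (Eventually.of_forall fun x => by
        rw [Real.norm_eq_abs, abs_le]
        constructor <;> [linarith [hFle1 (u - x), hFnonneg u]; linarith [hFle1 u, hFnonneg (u - x)]])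
    simpa [mul_comm, IntegrableOn] using this
  have hI2 : IntegrableOn (fun x : ℝ => G x * Fbar F u) (Ioc 0 u) volume :=
    hGiOn.mul_const _
  have hRHS : (∫ y in (0:ℝ)..u, g y * Fbar F (u - y)) =
      (∫ x in Ioc (0:ℝ) u, G x * (F u - F (u - x)) ∂volume) +
        (∫ x in Ioc (0:ℝ) u, G x ∂volume) * Fbar F u := by
    have h1 : (∫ y in (0:ℝ)..u, g y * Fbar F (u - y)) =
        ∫ y in (0:ℝ)..u, G y * Fbar F (u - y) := by
      apply intervalIntegral.integral_congr
      intro t ht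
      rw [uIcc_of_le hu.le] at ht
      simp only [hGg t ht.1]
    rw [h1, intervalIntegral.integral_of_le hu.le]
    have h2 : ∀ x ∈ Ioc (0:ℝ) u, G x * Fbar F (u - x) =
        G x * (F u - F (u - x)) + G x * Fbar F u := by
      intro x _
      simp only [Fbar]
      ring
    rw [setIntegral_congr_fun measurableSet_Ioc h2, integral_add hI1 hI2,
      integral_mul_const]
  -- final computation
  rw [hsplit, hIoiInt, hIocIoo, hmain, hRHS, hΦu,
    intervalIntegral.integral_of_le hu.le]
  ring
end
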